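/- arXiv:2007.05447 — 8 statements merged into one kernel-verified Lean document; each statement's English description precedes it below -/
import Mathlib

section
/- Let U ⊆ Δ(X×Y) be a convex and compact uncertainty set. Then min_{h ∈ T(X,Y)} max_{p ∈ U} ℓ(h,p) = max_{p ∈ U} min_{h ∈ T(X,Y)} ℓ(h,p) = H_ℓ(U). Moreover, if h^U attains the minimum of h ↦ max_{p ∈ U} ℓ(h,p) over T(X,Y) and p^U attains the maximum of H_ℓ over U, then ℓ(h^U, p^U) = H_ℓ(U); in particular h^U minimizes ℓ(·, p^U) over T(X,Y) and p^U maximizes ℓ(h^U, ·) over U. -/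
open scoped BigOperators Classical

noncomputable section

/-- The probability simplex on a finite type `Z`. -/
def probSimplex (Z : Type*) [Fintype Z] : Set (Z → ℝ) :=
  {p | (∀ z, 0 ≤ p z) ∧ ∑ z, p z = 1}

/-- Classification rules: maps assigning to each instance a distribution over labels. -/
def ruleSet (X Y : Type*) [Fintype Y] : Set (X → Y → ℝ) :=
  {h | ∀ x, h x ∈ probSimplex Y}

/-- Expected loss `ℓ(h,p) = ∑_{x,y} p(x,y) · L(h(·|x), y)`. -/
def expLoss {X Y : Type*} [Fintype X] [Fintype Y]
    (L : (Y → ℝ) → Y → EReal) (h : X → Y → ℝ) (p : X × Y → ℝ) : EReal :=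
  ∑ z : X × Y, (p z : EReal) * L (h z.1) z.2

/-- Generalized entropy `H_ℓ(p) = inf over rules h of ℓ(h,p)`. -/
def entropyFn {X Y : Type*} [Fintype X] [Fintype Y]
    (L : (Y → ℝ) → Y → EReal) (p : X × Y → ℝ) : EReal :=
  ⨅ h ∈ ruleSet X Y, expLoss L h p

/-- Maximum entropy over an uncertainty set `U`. -/
def maxEntropy {X Y : Type*} [Fintype X] [Fintype Y]
    (L : (Y → ℝ) → Y → EReal) (U : Set (X × Y → ℝ)) : EReal :=
  ⨆ p ∈ U, entropyFn L p

/-- Convexity of the score function in its first argument. -/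
def ConvexInFirst {Y : Type*} [Fintype Y] (L : (Y → ℝ) → Y → EReal) : Prop :=
  ∀ (y : Y) (q₁ q₂ : Y → ℝ), q₁ ∈ probSimplex Y → q₂ ∈ probSimplex Y →
    ∀ t : ℝ, 0 ≤ t → t ≤ 1 →
      L (t • q₁ + (1 - t) • q₂) y ≤ (t : EReal) * L q₁ y + ((1 - t : ℝ) : EReal) * L q₂ y

/-- Uncertainty set `U^{a,b}` given by interval expectations' constraints. -/
def uncertainty {X Y : Type*} [Fintype X] [Fintype Y] {m : ℕ}
    (Φ : X × Y → Fin m → ℝ) (a b : Fin m → ℝ) : Set (X × Y → ℝ) :=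
  {p | p ∈ probSimplex (X × Y) ∧
    ∀ i, a i ≤ (∑ z, p z * Φ z i) ∧ (∑ z, p z * Φ z i) ≤ b i}

/-- Uncertainty set `U^{a}` given by exact expectations' constraints. -/
def uncertaintyEq {X Y : Type*} [Fintype X] [Fintype Y] {m : ℕ}
    (Φ : X × Y → Fin m → ℝ) (a : Fin m → ℝ) : Set (X × Y → ℝ) :=
  {p | p ∈ probSimplex (X × Y) ∧ ∀ i, (∑ z, p z * Φ z i) = a i}

/-- The convex set `𝓛` associated with the score function `L`. -/
def LsetOf {Y : Type*} [Fintype Y] (L : (Y → ℝ) → Y → EReal) : Set (Y → ℝ) :=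
  {c | ∃ q ∈ probSimplex Y, ∀ y, (c y : EReal) + L q y ≤ 0}

/-- The function `φ_ℓ(μ, x)`. -/
def phiFn {X Y : Type*} [Fintype Y] {m : ℕ}
    (L : (Y → ℝ) → Y → EReal) (Φ : X × Y → Fin m → ℝ) (μ : Fin m → ℝ) (x : X) : ℝ :=
  sSup {ν : ℝ | (fun y => (∑ i, Φ (x, y) i * μ i) + ν) ∈ LsetOf L}

/-- The function `ψ_ℓ(μ, ν, x)`. -/
def psiFn {X Y : Type*} [Fintype Y] {m : ℕ}
    (L : (Y → ℝ) → Y → EReal) (Φ : X × Y → Fin m → ℝ) (μ : Fin m → ℝ)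
    (ν : Y → ℝ) (x : X) : ℝ :=
  sSup {ρ : ℝ | (fun y => (∑ i, Φ (x, y) i * μ i) + ν y + ρ) ∈ LsetOf L}

/-- Empirical marginal of a sequence of training instances. -/
def empMarginal {X : Type*} [Fintype X] {n : ℕ} (xs : Fin n → X) (x : X) : ℝ :=
  (Finset.univ.filter fun j => xs j = x).card / n

/-- Uncertainty set with instances' marginal fixed to the empirical marginal. -/
def uncertaintyX {X Y : Type*} [Fintype X] [Fintype Y] {m n : ℕ}
    (Φ : X × Y → Fin m → ℝ) (a b : Fin m → ℝ) (xs : Fin n → X) : Set (X × Y → ℝ) :=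
  {p ∈ uncertainty Φ a b | ∀ x, (∑ y, p (x, y)) = empMarginal xs x}

/-- Uncertainty set with labels' marginal fixed to `p₀`. -/
def uncertaintyY {X Y : Type*} [Fintype X] [Fintype Y] {m : ℕ}
    (Φ : X × Y → Fin m → ℝ) (a b : Fin m → ℝ) (p₀ : Y → ℝ) : Set (X × Y → ℝ) :=
  {p ∈ uncertainty Φ a b | ∀ y, (∑ x, p (x, y)) = p₀ y}

/-- Uncertainty set with both marginals fixed. -/
def uncertaintyXY {X Y : Type*} [Fintype X] [Fintype Y] {m n : ℕ}
    (Φ : X × Y → Fin m → ℝ) (a b : Fin m → ℝ) (xs : Fin n → X) (p₀ : Y → ℝ) :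
    Set (X × Y → ℝ) :=
  {p ∈ uncertainty Φ a b |
    (∀ x, (∑ y, p (x, y)) = empMarginal xs x) ∧ ∀ y, (∑ x, p (x, y)) = p₀ y}


open scoped BigOperators Classical

noncomputable section

namespace MinimaxAux

open Filter Topology

/-- distributivity of nonneg real scalar over EReal addition -/
lemma smul_distrib {r : ℝ} (hr : 0 ≤ r) (u v : EReal) :
    (r : EReal) * (u + v) = (r : EReal) * u + (r : EReal) * v := by
  rcases eq_or_lt_of_le hr with h0 | hpos
  · simp [← h0]
  · have hre : (0 : EReal) < (r : EReal) := by exact_mod_cast hpos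
    induction u using EReal.rec with
    | bot => simp [EReal.coe_mul_bot_of_pos hpos]
    | top =>
      induction v using EReal.rec with
      | bot => simp [EReal.coe_mul_bot_of_pos hpos, EReal.coe_mul_top_of_pos hpos]
      | coe y =>
        rw [EReal.top_add_coe, EReal.coe_mul_top_of_pos hpos, EReal.top_add_of_ne_bot]
        exact (EReal.coe_ne_bot _)
      | top => simp [EReal.coe_mul_top_of_pos hpos]
    | coe x =>
      induction v using EReal.rec with
      | bot => simp [EReal.coe_mul_bot_of_pos hpos]
      | coe y => norm_cast; ring
      | top =>
        rw [EReal.coe_add_top, EReal.coe_mul_top_of_pos hpos, ← EReal.coe_mul,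
          EReal.coe_add_top]

lemma smul_sum {r : ℝ} (hr : 0 ≤ r) {ι : Type*} (s : Finset ι) (f : ι → EReal) :
    (r : EReal) * ∑ i ∈ s, f i = ∑ i ∈ s, (r : EReal) * f i := by
  classical
  induction s using Finset.induction with
  | empty => simp
  | @insert a s hx ih =>
    rw [Finset.sum_insert hx, Finset.sum_insert hx, smul_distrib hr, ih]

/-- splitting a strict bound on an EReal sum into real bounds -/
lemma split_lt {c u v : EReal} (hu : u ≠ ⊥) (hv : v ≠ ⊥) (h : c < u + v) :
    ∃ a b : ℝ, (a : EReal) < u ∧ (b : EReal) < v ∧ c < (a : EReal) + (b : EReal) := by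
  obtain ⟨d, hcd, hduv⟩ := EReal.exists_between_coe_real h
  induction u using EReal.rec with
  | bot => exact absurd rfl hu
  | top =>
    obtain ⟨b, hb1, hb2⟩ := EReal.exists_between_coe_real (bot_lt_iff_ne_bot.2 hv)
    refine ⟨d - b, b, EReal.coe_lt_top _, hb2, ?_⟩
    rw [← EReal.coe_add]
    have he : d - b + b = d := by ring
    rw [he]
    exact hcd
  | coe x =>
    induction v using EReal.rec with
    | bot => exact absurd rfl hv
    | top =>
      refine ⟨x - 1, d - (x - 1), by exact_mod_cast by linarith, EReal.coe_lt_top _, ?_⟩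
      rw [← EReal.coe_add]
      have he : x - 1 + (d - (x - 1)) = d := by ring
      rw [he]
      exact hcd
    | coe y =>
      have hdxy : d < x + y := by exact_mod_cast hduv
      refine ⟨x - (x + y - d) / 2, y - (x + y - d) / 2, ?_, ?_, ?_⟩
      · exact_mod_cast by linarith
      · exact_mod_cast by linarith
      · rw [← EReal.coe_add]
        have he : x - (x + y - d) / 2 + (y - (x + y - d) / 2) = d := by ring
        rw [he]
        exact hcd

lemma lsc_const_mul {α : Type*} [TopologicalSpace α] {g : α → EReal} {r : ℝ}
    (hg : LowerSemicontinuous g) (hr : 0 ≤ r) :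
    LowerSemicontinuous fun x => (r : EReal) * g x := by
  rcases eq_or_lt_of_le hr with h0 | hpos
  · rw [← h0]
    simp only [EReal.coe_zero, zero_mul]
    exact lowerSemicontinuous_const
  · intro x c hc
    obtain ⟨d, hcd, hd⟩ := EReal.exists_between_coe_real hc
    have hre : (0 : EReal) < (r : EReal) := by exact_mod_cast hpos
    have key : ∀ z : EReal, ((d / r : ℝ) : EReal) < z ↔ (d : EReal) < (r : EReal) * z := by
      intro z
      rw [EReal.coe_div, ← not_le, ← not_le, EReal.le_div_iff_mul_le hre (EReal.coe_ne_top r),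
        EReal.mul_comm]
    have : ((d / r : ℝ) : EReal) < g x := (key _).2 hd
    filter_upwards [hg x _ this] with y hy
    exact hcd.trans ((key _).1 hy)

lemma lsc_add {α : Type*} [TopologicalSpace α] {g₁ g₂ : α → EReal}
    (h₁ : LowerSemicontinuous g₁) (h₂ : LowerSemicontinuous g₂) :
    LowerSemicontinuous fun x => g₁ x + g₂ x := by
  intro x c hc
  simp only at hc
  rcases eq_or_ne (g₁ x) ⊥ with hb | hb
  · rw [hb, EReal.bot_add] at hc; exact absurd hc not_lt_bot
  rcases eq_or_ne (g₂ x) ⊥ with hb2 | hb2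
  · rw [hb2, EReal.add_bot] at hc; exact absurd hc not_lt_bot
  obtain ⟨a, b, ha, hbb, hab⟩ := split_lt hb hb2 hc
  filter_upwards [h₁ x _ ha, h₂ x _ hbb] with y hy1 hy2
  exact hab.trans (EReal.add_lt_add hy1 hy2)

lemma lsc_sum {α : Type*} [TopologicalSpace α] {ι : Type*} (s : Finset ι)
    (f : ι → α → EReal) (hf : ∀ i ∈ s, LowerSemicontinuous (f i)) :
    LowerSemicontinuous fun x => ∑ i ∈ s, f i x := by
  classical
  induction s using Finset.induction with
  | empty =>
    simp only [Finset.sum_empty]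
    exact lowerSemicontinuous_const
  | @insert j s hj ih =>
    have := lsc_add (hf j (Finset.mem_insert_self j s))
      (ih fun i hi => hf i (Finset.mem_insert_of_mem hi))
    simpa [Finset.sum_insert hj] using this

end MinimaxAux

section Abstract

namespace MinimaxAux

set_option linter.unusedSectionVars false

open Filter Topology Set

lemma coe_div_lt_iff {a r : ℝ} (hr : 0 < r) (z : EReal) :
    ((a / r : ℝ) : EReal) < z ↔ (a : EReal) < (r : EReal) * z := by
  rw [EReal.coe_div, ← not_le, ← not_le,
    EReal.le_div_iff_mul_le (by exact_mod_cast hr) (EReal.coe_ne_top r), EReal.mul_comm]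

lemma combo_split {s : ℝ} (hs0 : 0 ≤ s) (hs1 : s ≤ 1) {u v : EReal} (hu : u ≠ ⊥) (hv : v ≠ ⊥)
    {β : ℝ} (h : (β : EReal) < ((1 - s : ℝ) : EReal) * u + (s : EReal) * v) :
    ∃ r0 r1 : ℝ, (r0 : EReal) < u ∧ (r1 : EReal) < v ∧ β < (1 - s) * r0 + s * r1 := by
  have hcoemul : ∀ (r : ℝ), 0 ≤ r → ∀ w : EReal, w ≠ ⊥ → (r : EReal) * w ≠ ⊥ := by
    intro r hr w hw
    rcases eq_or_lt_of_le hr with h0 | hpos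
    · rw [← h0]; simp
    · induction w using EReal.rec with
      | bot => exact absurd rfl hw
      | coe x => rw [← EReal.coe_mul]; exact EReal.coe_ne_bot _
      | top => rw [EReal.coe_mul_top_of_pos hpos]; exact (by simp : (⊤:EReal) ≠ ⊥)
  obtain ⟨a, b, ha, hb, hab⟩ := split_lt (hcoemul _ (by linarith) _ hu) (hcoemul _ hs0 _ hv) h
  have extract : ∀ (r : ℝ), 0 ≤ r → ∀ (w : EReal), w ≠ ⊥ → ∀ (c : ℝ), (c : EReal) < (r : EReal) * w →
      ∃ ρ : ℝ, (ρ : EReal) < w ∧ c ≤ r * ρ := by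
    intro r hr w hw c hc
    rcases eq_or_lt_of_le hr with h0 | hpos
    · obtain ⟨ρ, hρ1, hρ2⟩ := EReal.exists_between_coe_real (bot_lt_iff_ne_bot.2 hw)
      refine ⟨ρ, hρ2, ?_⟩
      rw [← h0] at hc ⊢
      rw [EReal.coe_zero, zero_mul] at hc
      have : c < 0 := by exact_mod_cast hc
      linarith [this.le]
    · refine ⟨c / r, (coe_div_lt_iff hpos w).2 hc, ?_⟩
      rw [mul_div_cancel₀ _ (ne_of_gt hpos)]
  obtain ⟨r0, hr0, har0⟩ := extract _ (by linarith) _ hu _ ha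
  obtain ⟨r1, hr1, har1⟩ := extract _ hs0 _ hv _ hb
  refine ⟨r0, r1, hr0, hr1, ?_⟩
  have hc : (β : EReal) < ((a + b : ℝ) : EReal) := by rw [EReal.coe_add]; exact hab
  have hβab : β < a + b := by exact_mod_cast hc
  nlinarith [har0, har1]

variable {E F : Type*} [AddCommGroup E] [Module ℝ E] [TopologicalSpace E]
  [IsTopologicalAddGroup E] [ContinuousSMul ℝ E] [FirstCountableTopology E] [T2Space E]

/-- convexity inequality on a set, EReal-valued -/
def ConvIneqOn (g : E → EReal) (B : Set E) : Prop :=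
  ∀ b0 ∈ B, ∀ b1 ∈ B, ∀ s : ℝ, 0 ≤ s → s ≤ 1 →
    g (s • b0 + (1 - s) • b1) ≤ (s : EReal) * g b0 + ((1 - s : ℝ) : EReal) * g b1

lemma bot_everywhere {B : Set E} (hBconv : Convex ℝ B) {g : E → EReal}
    (hlsc : LowerSemicontinuousOn g B) (hconv : ConvIneqOn g B) {x₀ : E} (hx₀ : x₀ ∈ B)
    (hbot : g x₀ = ⊥) : ∀ y ∈ B, g y = ⊥ := by
  intro y hy
  by_contra hne
  set z : ℕ → E := fun n => (1 / (n + 1) : ℝ) • x₀ + (1 - 1 / (n + 1) : ℝ) • y with hz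
  have haux : ∀ n : ℕ, 0 < (1 / (n + 1) : ℝ) ∧ (1 / (n + 1) : ℝ) ≤ 1 := by
    intro n
    have h1 : (0 : ℝ) < n + 1 := by positivity
    constructor
    · positivity
    · rw [div_le_one h1]; have : (0:ℝ) ≤ n := Nat.cast_nonneg n; linarith
  have hzB : ∀ n, z n ∈ B := fun n =>
    hBconv hx₀ hy (haux n).1.le (by linarith [(haux n).2]) (by ring)
  have hgz : ∀ n, g (z n) = ⊥ := by
    intro n
    have h := hconv x₀ hx₀ y hy (1 / (n + 1) : ℝ) (haux n).1.le (haux n).2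
    rw [hbot, EReal.coe_mul_bot_of_pos (haux n).1, EReal.bot_add] at h
    exact le_bot_iff.1 h
  have h1 : Tendsto (fun n : ℕ => (1 / (n + 1) : ℝ)) atTop (𝓝 0) := by
    exact tendsto_one_div_add_atTop_nhds_zero_nat
  have h2 : Tendsto (fun n : ℕ => (1 - 1 / (n + 1) : ℝ)) atTop (𝓝 1) := by
    simpa using tendsto_const_nhds.sub h1
  have hz_tend : Tendsto z atTop (𝓝 y) := by
    have h3 := (h1.smul_const x₀).add (h2.smul_const y)
    rw [hz]
    simpa using h3
  have hzw : Tendsto z atTop (𝓝[B] y) :=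
    tendsto_nhdsWithin_iff.2 ⟨hz_tend, Eventually.of_forall hzB⟩
  obtain ⟨n, hn⟩ := (hzw.eventually (hlsc y hy ⊥ (bot_lt_iff_ne_bot.2 hne))).exists
  rw [hgz n] at hn
  exact lt_irrefl _ hn

lemma exists_real_lb {B : Set E} (hB : IsCompact B) {g : E → EReal}
    (hlsc : LowerSemicontinuousOn g B) (hne : ∀ b ∈ B, g b ≠ ⊥) :
    ∃ m : ℝ, ∀ b ∈ B, (m : EReal) ≤ g b := by
  by_contra hcon
  push_neg at hcon
  choose b hbB hblt using fun n : ℕ => hcon (-(n : ℝ))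
  obtain ⟨bstar, hbstarB, φ, hφ, hbconv⟩ := hB.isSeqCompact hbB
  obtain ⟨c, _, hc2⟩ := EReal.exists_between_coe_real (bot_lt_iff_ne_bot.2 (hne _ hbstarB))
  have hzw : Tendsto (b ∘ φ) atTop (𝓝[B] bstar) :=
    tendsto_nhdsWithin_iff.2 ⟨hbconv, Eventually.of_forall (fun n => hbB _)⟩
  have hev := hzw.eventually (hlsc _ hbstarB _ hc2)
  obtain ⟨n, hn1, hn2⟩ := (hev.and (eventually_ge_atTop (Nat.ceil (-c)))).exists
  have h1 : (c : EReal) < ((-(φ n : ℝ) : ℝ) : EReal) := hn1.trans (hblt (φ n))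
  have h2 : c < -(φ n : ℝ) := by exact_mod_cast h1
  have h3 : (-c : ℝ) ≤ Nat.ceil (-c) := Nat.le_ceil _
  have h4 : (Nat.ceil (-c) : ℝ) ≤ (n : ℝ) := by exact_mod_cast hn2
  have h5 : (n : ℝ) ≤ (φ n : ℝ) := by exact_mod_cast hφ.le_apply
  linarith

lemma sublevel_closed {B : Set E} (hBc : IsClosed B) {g : E → EReal}
    (hlsc : LowerSemicontinuousOn g B) (c : EReal) :
    IsClosed {b | b ∈ B ∧ g b ≤ c} := by
  rw [isClosed_iff_clusterPt]
  intro x hx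
  have hxcl : x ∈ closure {b | b ∈ B ∧ g b ≤ c} := mem_closure_iff_clusterPt.2 hx
  have hxB : x ∈ B := hBc.closure_subset ((closure_mono (fun b hb => hb.1)) hxcl)
  refine ⟨hxB, ?_⟩
  by_contra hgt
  push_neg at hgt
  have hnb : (𝓝[{b | b ∈ B ∧ g b ≤ c}] x).NeBot := mem_closure_iff_nhdsWithin_neBot.1 hxcl
  have h1 : ∀ᶠ b in 𝓝[{b | b ∈ B ∧ g b ≤ c}] x, c < g b :=
    (hlsc x hxB c hgt).filter_mono (nhdsWithin_mono x (fun b hb => hb.1))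
  have h2 : ∀ᶠ b in 𝓝[{b | b ∈ B ∧ g b ≤ c}] x, g b ≤ c :=
    eventually_nhdsWithin_of_forall (fun b hb => hb.2)
  obtain ⟨b, hb1, hb2⟩ := (h1.and h2).exists
  exact absurd hb1 (not_lt.2 hb2)

lemma sublevel_convex {B : Set E} (hB : Convex ℝ B) {g : E → EReal} (hg : ConvIneqOn g B)
    (c : ℝ) : Convex ℝ {b | b ∈ B ∧ g b ≤ (c : EReal)} := by
  intro x hx y hy s1 s2 hs1 hs2 hsum
  refine ⟨hB hx.1 hy.1 hs1 hs2 hsum, ?_⟩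
  have hs2' : s2 = 1 - s1 := by linarith
  subst hs2'
  have h := hg x hx.1 y hy.1 s1 hs1 (by linarith)
  refine le_trans h (le_trans (add_le_add
    (mul_le_mul_of_nonneg_left hx.2 (by exact_mod_cast hs1))
    (mul_le_mul_of_nonneg_left hy.2 (by exact_mod_cast (by linarith : (0:ℝ) ≤ 1 - s1)))) ?_)
  rw [← EReal.coe_mul, ← EReal.coe_mul, ← EReal.coe_add]
  have : s1 * c + (1 - s1) * c = c := by ring
  rw [this]

lemma combo_convex {B : Set E} {g0 g1 : E → EReal} (hc0 : ConvIneqOn g0 B)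
    (hc1 : ConvIneqOn g1 B) {r : ℝ} (hr0 : 0 ≤ r) (hr1 : r ≤ 1) :
    ConvIneqOn (fun b => ((1 - r : ℝ) : EReal) * g0 b + (r : EReal) * g1 b) B := by
  intro b0 hb0 b1 hb1 s hs0 hs1
  have h0 := hc0 b0 hb0 b1 hb1 s hs0 hs1
  have h1 := hc1 b0 hb0 b1 hb1 s hs0 hs1
  have hr0' : (0 : EReal) ≤ ((1 - r : ℝ) : EReal) := by exact_mod_cast (by linarith : (0:ℝ) ≤ 1 - r)
  have hr' : (0 : EReal) ≤ (r : EReal) := by exact_mod_cast hr0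
  refine le_trans (add_le_add (mul_le_mul_of_nonneg_left h0 hr0')
    (mul_le_mul_of_nonneg_left h1 hr')) (le_of_eq ?_)
  have comm : ∀ (p q : ℝ) (X : EReal), (p : EReal) * ((q : EReal) * X) = (q : EReal) * ((p : EReal) * X) := by
    intro p q X
    rw [← mul_assoc, ← EReal.coe_mul, mul_comm p q, EReal.coe_mul, mul_assoc]
  rw [smul_distrib (by linarith : (0:ℝ) ≤ 1 - r), smul_distrib hr0,
    smul_distrib hs0 (((1 - r : ℝ) : EReal) * g0 b0) ((r : EReal) * g1 b0),
    smul_distrib (by linarith : (0:ℝ) ≤ 1 - s) (((1 - r : ℝ) : EReal) * g0 b1) ((r : EReal) * g1 b1),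
    comm (1-r) s, comm r s, comm (1-r) (1-s), comm r (1-s)]
  abel

end MinimaxAux

end Abstract

section TwoPoint

namespace MinimaxAux

set_option linter.unusedSectionVars false
set_option maxHeartbeats 1000000

open Filter Topology Set

variable {E F : Type*} [AddCommGroup E] [Module ℝ E] [TopologicalSpace E]
  [IsTopologicalAddGroup E] [ContinuousSMul ℝ E] [FirstCountableTopology E] [T2Space E]

lemma two_point {B : Set E} {f : F → E → EReal} {A : Set F}
    (hBne : B.Nonempty) (hBcomp : IsCompact B) (hBconv : Convex ℝ B)
    (hconv : ∀ a ∈ A, ConvIneqOn (f a) B)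
    (hlsc : ∀ a ∈ A, LowerSemicontinuousOn (f a) B)
    (hmix : ∀ a0 ∈ A, ∀ a1 ∈ A, ∀ t : ℝ, 0 ≤ t → t ≤ 1 →
      ∃ a ∈ A, ∀ b ∈ B, ((1 - t : ℝ) : EReal) * f a0 b + (t : EReal) * f a1 b ≤ f a b)
    {W : EReal} (hW : ∀ a ∈ A, (⨅ b ∈ B, f a b) ≤ W)
    {a0 a1 : F} (ha0 : a0 ∈ A) (ha1 : a1 ∈ A) {γ : ℝ} (hγ : W < (γ : EReal)) :
    ∃ b ∈ B, f a0 b ≤ (γ : EReal) ∧ f a1 b ≤ (γ : EReal) := by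
  have hexists : ∀ a ∈ A, ∀ θ : ℝ, W < (θ : EReal) → ∃ b ∈ B, f a b < (θ : EReal) := by
    intro a ha θ hθ
    have h1 : (⨅ b ∈ B, f a b) < (θ : EReal) := lt_of_le_of_lt (hW a ha) hθ
    obtain ⟨b, hb⟩ := iInf_lt_iff.1 h1
    obtain ⟨hbB, hlt⟩ := iInf_lt_iff.1 hb
    exact ⟨b, hbB, hlt⟩
  obtain ⟨β, hWβ, hβγ⟩ := EReal.exists_between_coe_real hγ
  have hβγ' : β < γ := by exact_mod_cast hβγ
  -- bottom cases
  by_cases hbot0 : ∃ b ∈ B, f a0 b = ⊥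
  · obtain ⟨x₀, hx₀, hx₀b⟩ := hbot0
    obtain ⟨b, hbB, hlt⟩ := hexists a1 ha1 β hWβ
    exact ⟨b, hbB, by
      rw [bot_everywhere hBconv (hlsc a0 ha0) (hconv a0 ha0) hx₀ hx₀b b hbB]; exact bot_le,
      (hlt.trans hβγ).le⟩
  by_cases hbot1 : ∃ b ∈ B, f a1 b = ⊥
  · obtain ⟨x₀, hx₀, hx₀b⟩ := hbot1
    obtain ⟨b, hbB, hlt⟩ := hexists a0 ha0 β hWβ
    exact ⟨b, hbB, (hlt.trans hβγ).le, by
      rw [bot_everywhere hBconv (hlsc a1 ha1) (hconv a1 ha1) hx₀ hx₀b b hbB]; exact bot_le⟩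
  push_neg at hbot0 hbot1
  obtain ⟨m0, hm0⟩ := exists_real_lb hBcomp (hlsc a0 ha0) hbot0
  obtain ⟨m1, hm1⟩ := exists_real_lb hBcomp (hlsc a1 ha1) hbot1
  by_contra hcon
  push_neg at hcon
  have hH : ∀ b ∈ B, (γ : EReal) < f a0 b ∨ (γ : EReal) < f a1 b := by
    intro b hb
    rcases le_or_gt (f a0 b) (γ : EReal) with h | h
    · exact Or.inr (hcon b hb h)
    · exact Or.inl h
  -- the family of sublevel sets for the interpolated functionals
  set S : ℝ → Set E := fun t =>
    {b | b ∈ B ∧ ((1 - t : ℝ) : EReal) * f a0 b + (t : EReal) * f a1 b ≤ (β : EReal)} with hS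
  -- key one-sided derivations
  have hder0 : ∀ t : ℝ, 0 ≤ t → t < 1 → ∀ b, b ∈ S t → (γ : EReal) < f a1 b →
      f a0 b ≤ (((β - t * γ) / (1 - t) : ℝ) : EReal) := by
    intro t ht0 ht1 b hb hgt
    have h1 : ((1 - t : ℝ) : EReal) * f a0 b + ((t * γ : ℝ) : EReal) ≤ (β : EReal) := by
      rw [EReal.coe_mul]
      exact le_trans (add_le_add_right
        (mul_le_mul_of_nonneg_left hgt.le (by exact_mod_cast ht0)) _) hb.2
    have h2 : ((1 - t : ℝ) : EReal) * f a0 b ≤ ((β - t * γ : ℝ) : EReal) := by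
      have hrw : ((β - t * γ : ℝ) : EReal) = (β : EReal) - ((t * γ : ℝ) : EReal) := by
        rw [← EReal.coe_sub]
      rw [hrw, EReal.le_sub_iff_add_le (Or.inl (EReal.coe_ne_bot _)) (Or.inl (EReal.coe_ne_top _))]
      exact h1
    have hpos : (0 : EReal) < ((1 - t : ℝ) : EReal) := by
      exact_mod_cast (by linarith : (0 : ℝ) < 1 - t)
    rw [EReal.coe_div, EReal.le_div_iff_mul_le hpos (EReal.coe_ne_top _), EReal.mul_comm]
    exact h2
  have hder1 : ∀ t : ℝ, 0 < t → t ≤ 1 → ∀ b, b ∈ S t → (γ : EReal) < f a0 b →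
      f a1 b ≤ (((β - (1 - t) * γ) / t : ℝ) : EReal) := by
    intro t ht0 ht1 b hb hgt
    have h1 : (((1 - t) * γ : ℝ) : EReal) + (t : EReal) * f a1 b ≤ (β : EReal) := by
      rw [EReal.coe_mul]
      exact le_trans (add_le_add_left
        (mul_le_mul_of_nonneg_left hgt.le (by exact_mod_cast (by linarith : (0:ℝ) ≤ 1 - t))) _) hb.2
    have h2 : (t : EReal) * f a1 b ≤ ((β - (1 - t) * γ : ℝ) : EReal) := by
      have hrw : ((β - (1 - t) * γ : ℝ) : EReal) = (β : EReal) - (((1 - t) * γ : ℝ) : EReal) := by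
        rw [← EReal.coe_sub]
      rw [hrw, EReal.le_sub_iff_add_le (Or.inl (EReal.coe_ne_bot _)) (Or.inl (EReal.coe_ne_top _))]
      rw [add_comm]
      exact h1
    have hpos : (0 : EReal) < ((t : ℝ) : EReal) := by exact_mod_cast ht0
    rw [EReal.coe_div, EReal.le_div_iff_mul_le hpos (EReal.coe_ne_top _), EReal.mul_comm]
    exact h2
  have hc0γ : ∀ t : ℝ, 0 ≤ t → t < 1 → (β - t * γ) / (1 - t) ≤ γ := by
    intro t ht0 ht1
    rw [div_le_iff₀ (by linarith)]
    nlinarith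
  have hc1γ : ∀ t : ℝ, 0 < t → t ≤ 1 → (β - (1 - t) * γ) / t ≤ γ := by
    intro t ht0 ht1
    rw [div_le_iff₀ ht0]
    nlinarith
  -- the two parameter classes
  set P0 : Set ℝ := {t | t ∈ Icc (0:ℝ) 1 ∧ ∃ b, b ∈ S t ∧ f a0 b ≤ (γ : EReal)} with hP0
  set P1 : Set ℝ := {t | t ∈ Icc (0:ℝ) 1 ∧ ∃ b, b ∈ S t ∧ f a1 b ≤ (γ : EReal)} with hP1
  -- simple computations of the interpolated functional at the endpoints
  have hSend0 : ∀ b, b ∈ S 0 ↔ b ∈ B ∧ f a0 b ≤ (β : EReal) := by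
    intro b
    constructor
    · rintro ⟨hb1, hb2⟩
      refine ⟨hb1, ?_⟩
      simpa using hb2
    · rintro ⟨hb1, hb2⟩
      refine ⟨hb1, ?_⟩
      simpa using hb2
  have hSend1 : ∀ b, b ∈ S 1 ↔ b ∈ B ∧ f a1 b ≤ (β : EReal) := by
    intro b
    constructor
    · rintro ⟨hb1, hb2⟩
      refine ⟨hb1, ?_⟩
      simpa using hb2
    · rintro ⟨hb1, hb2⟩
      refine ⟨hb1, ?_⟩
      simpa using hb2
  have hd0 : (0 : ℝ) ∈ P0 := by
    obtain ⟨b, hbB, hlt⟩ := hexists a0 ha0 β hWβ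
    exact ⟨⟨le_refl 0, by norm_num⟩, b, (hSend0 b).2 ⟨hbB, hlt.le⟩, hlt.le.trans hβγ.le⟩
  have hd1 : (1 : ℝ) ∈ P1 := by
    obtain ⟨b, hbB, hlt⟩ := hexists a1 ha1 β hWβ
    exact ⟨⟨by norm_num, le_refl 1⟩, b, (hSend1 b).2 ⟨hbB, hlt.le⟩, hlt.le.trans hβγ.le⟩
  have hcover : ∀ t ∈ Icc (0:ℝ) 1, t ∈ P0 ∪ P1 := by
    rintro t ⟨ht0, ht1⟩
    obtain ⟨a, haA, hamix⟩ := hmix a0 ha0 a1 ha1 t ht0 ht1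
    obtain ⟨b, hbB, hblt⟩ := hexists a haA β hWβ
    have hbS : b ∈ S t := ⟨hbB, le_trans (hamix b hbB) hblt.le⟩
    rcases le_or_gt (f a0 b) (γ : EReal) with hg0 | hg0
    · exact Or.inl ⟨⟨ht0, ht1⟩, b, hbS, hg0⟩
    · rcases eq_or_lt_of_le ht0 with h0 | htpos
      · exfalso
        have hb0 : f a0 b ≤ (β : EReal) := by
          have h := hbS.2
          rw [← h0] at h
          simpa using h
        exact absurd (hb0.trans hβγ.le) (not_le.2 hg0)
      · have h := hder1 t htpos ht1 b hbS hg0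
        refine Or.inr ⟨⟨ht0, ht1⟩, b, hbS, h.trans ?_⟩
        exact_mod_cast hc1γ t htpos ht1
  have hdisj : ∀ t : ℝ, ¬ (t ∈ P0 ∧ t ∈ P1) := by
    rintro t ⟨⟨⟨ht0, ht1⟩, b, hbS, hb0γ⟩, ⟨-, b', hb'S, hb'1γ⟩⟩
    have hgb1 : (γ : EReal) < f a1 b := (hH b hbS.1).resolve_left (not_lt.2 hb0γ)
    have hgb'0 : (γ : EReal) < f a0 b' := (hH b' hb'S.1).resolve_right (not_lt.2 hb'1γ)
    rcases eq_or_lt_of_le ht0 with h0 | htpos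
    · have h : f a0 b' ≤ (β : EReal) := by
        have h := hb'S.2
        rw [← h0] at h
        simpa using h
      exact absurd (hgb'0.trans_le h) (not_lt.2 hβγ.le)
    rcases eq_or_lt_of_le ht1 with h1 | htlt1
    · have h : f a1 b ≤ (β : EReal) := by
        have h := hbS.2
        rw [h1] at h
        simpa using h
      exact absurd (hgb1.trans_le h) (not_lt.2 hβγ.le)
    -- interior case : connectedness of S t
    have hScon : IsPreconnected (S t) := by
      have hconvS : Convex ℝ (S t) :=
        sublevel_convex hBconv (combo_convex (hconv a0 ha0) (hconv a1 ha1) htpos.le htlt1.le) β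
      exact hconvS.isPreconnected
    have hu : IsClosed {x | x ∈ B ∧ f a0 x ≤ (((β - t * γ) / (1 - t) : ℝ) : EReal)} :=
      sublevel_closed hBcomp.isClosed (hlsc a0 ha0) _
    have hv : IsClosed {x | x ∈ B ∧ f a1 x ≤ (((β - (1 - t) * γ) / t : ℝ) : EReal)} :=
      sublevel_closed hBcomp.isClosed (hlsc a1 ha1) _
    have hsubset : S t ⊆ {x | x ∈ B ∧ f a0 x ≤ (((β - t * γ) / (1 - t) : ℝ) : EReal)} ∪
        {x | x ∈ B ∧ f a1 x ≤ (((β - (1 - t) * γ) / t : ℝ) : EReal)} := by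
      intro x hx
      rcases hH x hx.1 with h | h
      · exact Or.inr ⟨hx.1, hder1 t htpos htlt1.le x hx h⟩
      · exact Or.inl ⟨hx.1, hder0 t htpos.le htlt1 x hx h⟩
    have hempt : S t ∩ ({x | x ∈ B ∧ f a0 x ≤ (((β - t * γ) / (1 - t) : ℝ) : EReal)} ∩
        {x | x ∈ B ∧ f a1 x ≤ (((β - (1 - t) * γ) / t : ℝ) : EReal)}) = ∅ := by
      rw [Set.eq_empty_iff_forall_notMem]
      rintro x ⟨hxS, hx0, hx1⟩
      have h0 : f a0 x ≤ (γ : EReal) :=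
        hx0.2.trans (by exact_mod_cast hc0γ t htpos.le htlt1)
      have h1 : f a1 x ≤ (γ : EReal) :=
        hx1.2.trans (by exact_mod_cast hc1γ t htpos htlt1.le)
      rcases hH x hxS.1 with h | h
      · exact absurd h0 (not_le.2 h)
      · exact absurd h1 (not_le.2 h)
    rcases isPreconnected_iff_subset_of_disjoint_closed.1 hScon _ _ hu hv hsubset hempt with
      hsub | hsub
    · have := (hsub hb'S).2
      have hle : f a0 b' ≤ (γ : EReal) := this.trans (by exact_mod_cast hc0γ t htpos.le htlt1)
      exact absurd hle (not_le.2 hgb'0)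
    · have := (hsub hbS).2
      have hle : f a1 b ≤ (γ : EReal) := this.trans (by exact_mod_cast hc1γ t htpos htlt1.le)
      exact absurd hle (not_le.2 hgb1)
  -- closedness of P0 and P1
  have hmm0 : ∀ b ∈ B, ((min m0 m1 : ℝ) : EReal) ≤ f a0 b :=
    fun b hb => le_trans (by exact_mod_cast min_le_left m0 m1) (hm0 b hb)
  have hmm1 : ∀ b ∈ B, ((min m0 m1 : ℝ) : EReal) ≤ f a1 b :=
    fun b hb => le_trans (by exact_mod_cast min_le_right m0 m1) (hm1 b hb)
  -- key sequential limit fact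
  have hkey : ∀ (tn : ℕ → ℝ) (t : ℝ), (∀ n, tn n ∈ Icc (0:ℝ) 1) → Tendsto tn atTop (𝓝 t) →
      ∀ (bn : ℕ → E), (∀ n, bn n ∈ S (tn n)) → ∀ a ∈ A, LowerSemicontinuousOn (f a) B →
      (∀ n, f a (bn n) ≤ (γ : EReal)) →
      ∃ bstar, bstar ∈ S t ∧ f a bstar ≤ (γ : EReal) := by
    intro tn t htn hlim bn hbn a haA halsc hsel
    have htI : t ∈ Icc (0:ℝ) 1 := isClosed_Icc.isSeqClosed htn hlim
    obtain ⟨bstar, hbstarB, φ, hφ, hbconv⟩ := hBcomp.isSeqCompact (fun n => (hbn n).1)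
    have hzw : Tendsto (bn ∘ φ) atTop (𝓝[B] bstar) :=
      tendsto_nhdsWithin_iff.2 ⟨hbconv, Eventually.of_forall (fun n => (hbn _).1)⟩
    have hgγ : f a bstar ≤ (γ : EReal) := by
      by_contra hgt
      push_neg at hgt
      obtain ⟨n, hn⟩ := (hzw.eventually (halsc bstar hbstarB _ hgt)).exists
      exact absurd (hsel (φ n)) (not_le.2 hn)
    have hbstarS : bstar ∈ S t := by
      refine ⟨hbstarB, ?_⟩
      by_contra hgt
      push_neg at hgt
      obtain ⟨r0, r1, hr0, hr1, hcombo⟩ := combo_split htI.1 htI.2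
        (hbot0 bstar hbstarB) (hbot1 bstar hbstarB) hgt
      have hev0 := hzw.eventually ((hlsc a0 ha0) bstar hbstarB _ hr0)
      have hev1 := hzw.eventually ((hlsc a1 ha1) bstar hbstarB _ hr1)
      have hseq : ∀ᶠ n in atTop, (1 - tn (φ n)) * r0 + tn (φ n) * r1 ≤ β := by
        filter_upwards [hev0, hev1] with n h0 h1
        have hcoef0 : (0:ℝ) ≤ 1 - tn (φ n) := by linarith [(htn (φ n)).2]
        have hcoef1 : (0:ℝ) ≤ tn (φ n) := (htn (φ n)).1
        have hle : (((1 - tn (φ n)) * r0 + tn (φ n) * r1 : ℝ) : EReal) ≤ (β : EReal) := by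
          rw [EReal.coe_add, EReal.coe_mul, EReal.coe_mul]
          refine le_trans (add_le_add
            (mul_le_mul_of_nonneg_left h0.le (by exact_mod_cast hcoef0))
            (mul_le_mul_of_nonneg_left h1.le (by exact_mod_cast hcoef1))) ((hbn (φ n)).2)
        exact_mod_cast hle
      have hlim' : Tendsto (fun n => (1 - tn (φ n)) * r0 + tn (φ n) * r1) atTop
          (𝓝 ((1 - t) * r0 + t * r1)) := by
        have h1 : Tendsto (fun n => tn (φ n)) atTop (𝓝 t) := hlim.comp hφ.tendsto_atTop
        exact ((tendsto_const_nhds.sub h1).mul tendsto_const_nhds).add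
          (h1.mul tendsto_const_nhds)
      have := le_of_tendsto hlim' hseq
      linarith
    exact ⟨bstar, hbstarS, hgγ⟩
  have hP0closed : IsClosed P0 := by
    apply IsSeqClosed.isClosed
    intro tn t htn hlim
    choose bn hbn hbγ using fun n => (htn n).2
    obtain ⟨bstar, h1, h2⟩ := hkey tn t (fun n => (htn n).1) hlim bn hbn a0 ha0 (hlsc a0 ha0) hbγ
    exact ⟨isClosed_Icc.isSeqClosed (fun n => (htn n).1) hlim, bstar, h1, h2⟩
  have hP1closed : IsClosed P1 := by
    apply IsSeqClosed.isClosed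
    intro tn t htn hlim
    choose bn hbn hbγ using fun n => (htn n).2
    obtain ⟨bstar, h1, h2⟩ := hkey tn t (fun n => (htn n).1) hlim bn hbn a1 ha1 (hlsc a1 ha1) hbγ
    exact ⟨isClosed_Icc.isSeqClosed (fun n => (htn n).1) hlim, bstar, h1, h2⟩
  -- connectedness of the interval yields a contradiction
  have hIccdisj : Icc (0:ℝ) 1 ∩ (P0 ∩ P1) = ∅ := by
    rw [Set.eq_empty_iff_forall_notMem]
    rintro t ⟨-, ht0, ht1⟩
    exact hdisj t ⟨ht0, ht1⟩
  rcases isPreconnected_iff_subset_of_disjoint_closed.1 isPreconnected_Icc _ _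
      hP0closed hP1closed hcover hIccdisj with hsub | hsub
  · exact hdisj 1 ⟨hsub ⟨by norm_num, le_refl 1⟩, hd1⟩
  · exact hdisj 0 ⟨hd0, hsub ⟨le_refl 0, by norm_num⟩⟩

end MinimaxAux

end TwoPoint

section MinimaxMain

namespace MinimaxAux

set_option linter.unusedSectionVars false
set_option maxHeartbeats 1000000

open Filter Topology Set

variable {E F : Type*} [AddCommGroup E] [Module ℝ E] [TopologicalSpace E]
  [IsTopologicalAddGroup E] [ContinuousSMul ℝ E] [FirstCountableTopology E] [T2Space E]

lemma claim {f : F → E → EReal} {A : Set F} : ∀ (n : ℕ) (B : Set E), B.Nonempty → IsCompact B →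
    Convex ℝ B → (∀ a ∈ A, ConvIneqOn (f a) B) → (∀ a ∈ A, LowerSemicontinuousOn (f a) B) →
    (∀ a0 ∈ A, ∀ a1 ∈ A, ∀ t : ℝ, 0 ≤ t → t ≤ 1 →
      ∃ a ∈ A, ∀ b ∈ B, ((1 - t : ℝ) : EReal) * f a0 b + (t : EReal) * f a1 b ≤ f a b) →
    ∀ (W : EReal), (∀ a ∈ A, (⨅ b ∈ B, f a b) ≤ W) → ∀ (γ : ℝ), W < (γ : EReal) →
    ∀ (as : Fin n → F), (∀ i, as i ∈ A) → ∃ b ∈ B, ∀ i, f (as i) b ≤ (γ : EReal) := by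
  intro n
  induction n with
  | zero =>
    intro B hBne _ _ _ _ _ _ _ _ _ as _
    obtain ⟨b, hb⟩ := hBne
    exact ⟨b, hb, fun i => i.elim0⟩
  | succ n ih =>
    intro B hBne hBcomp hBconv hconv hlsc hmix W hW γ hγ as has
    obtain ⟨θ, hWθ, hθγ⟩ := EReal.exists_between_coe_real hγ
    set aN := as (Fin.last n) with haN
    set B₁ : Set E := {b | b ∈ B ∧ f aN b ≤ (θ : EReal)} with hB₁
    have hW₁ : ∀ a ∈ A, (⨅ b ∈ B₁, f a b) ≤ (θ : EReal) := by
      intro a ha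
      obtain ⟨b, hbB, h1, h2⟩ := two_point hBne hBcomp hBconv hconv hlsc hmix hW ha
        (has (Fin.last n)) hWθ
      exact le_trans (iInf₂_le b ⟨hbB, h2⟩) h1
    have hB₁ne : B₁.Nonempty := by
      obtain ⟨b, hbB, h1, h2⟩ := two_point hBne hBcomp hBconv hconv hlsc hmix hW
        (has (Fin.last n)) (has (Fin.last n)) hWθ
      exact ⟨b, hbB, h1⟩
    have hB₁sub : B₁ ⊆ B := fun b hb => hb.1
    have hB₁comp : IsCompact B₁ :=
      IsCompact.of_isClosed_subset hBcomp
        (sublevel_closed hBcomp.isClosed (hlsc aN (has _)) _) hB₁sub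
    have hB₁conv : Convex ℝ B₁ := sublevel_convex hBconv (hconv aN (has _)) θ
    obtain ⟨b, hbB₁, hb⟩ := ih B₁ hB₁ne hB₁comp hB₁conv
      (fun a ha b0 hb0 b1 hb1 s hs0 hs1 => hconv a ha b0 hb0.1 b1 hb1.1 s hs0 hs1)
      (fun a ha => (hlsc a ha).mono hB₁sub)
      (fun p0 hp0 p1 hp1 t ht0 ht1 => by
        obtain ⟨a, ha, hmx⟩ := hmix p0 hp0 p1 hp1 t ht0 ht1
        exact ⟨a, ha, fun b hb => hmx b hb.1⟩)
      (θ : EReal) hW₁ γ hθγ (fun i => as i.castSucc) (fun i => has _)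
    refine ⟨b, hbB₁.1, fun i => ?_⟩
    induction i using Fin.lastCases with
    | last => exact hbB₁.2.trans hθγ.le
    | cast j => exact hb j
  termination_by n => n
  decreasing_by exact Nat.lt_succ_self n

lemma minimax_le {B : Set E} {f : F → E → EReal} {A : Set F}
    (hBne : B.Nonempty) (hBcomp : IsCompact B) (hBconv : Convex ℝ B)
    (hconv : ∀ a ∈ A, ConvIneqOn (f a) B)
    (hlsc : ∀ a ∈ A, LowerSemicontinuousOn (f a) B)
    (hmix : ∀ a0 ∈ A, ∀ a1 ∈ A, ∀ t : ℝ, 0 ≤ t → t ≤ 1 →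
      ∃ a ∈ A, ∀ b ∈ B, ((1 - t : ℝ) : EReal) * f a0 b + (t : EReal) * f a1 b ≤ f a b) :
    (⨅ b ∈ B, ⨆ a ∈ A, f a b) ≤ ⨆ a ∈ A, ⨅ b ∈ B, f a b := by
  set V : EReal := ⨆ a ∈ A, ⨅ b ∈ B, f a b with hV
  have key : ∀ γ : ℝ, V < (γ : EReal) → (⨅ b ∈ B, ⨆ a ∈ A, f a b) ≤ (γ : EReal) := by
    intro γ hγ
    have hW : ∀ a ∈ A, (⨅ b ∈ B, f a b) ≤ V := fun a ha => le_iSup₂ (f := fun a _ => ⨅ b ∈ B, f a b) a ha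
    -- finite intersection property via compactness
    set Z : ↥A → Set E := fun a => {b | b ∈ B ∧ f a.1 b ≤ (γ : EReal)} with hZ
    have hZclosed : ∀ a : ↥A, IsClosed (Z a) :=
      fun a => sublevel_closed hBcomp.isClosed (hlsc a.1 a.2) _
    have hne : (B ∩ ⋂ a : ↥A, Z a).Nonempty := by
      by_contra hempty
      rw [Set.not_nonempty_iff_eq_empty] at hempty
      obtain ⟨tfin, htfin⟩ := hBcomp.elim_finite_subfamily_closed Z hZclosed hempty
      set n := tfin.card with hn
      set e := tfin.equivFin with he
      obtain ⟨b, hbB, hb⟩ := claim n B hBne hBcomp hBconv hconv hlsc hmix V hW γ hγ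
        (fun i => ((e.symm i : ↥tfin) : ↥A).1) (fun i => ((e.symm i : ↥tfin) : ↥A).2)
      have hbmem : b ∈ B ∩ ⋂ a ∈ tfin, Z a := by
        refine ⟨hbB, ?_⟩
        rw [Set.mem_iInter₂]
        intro a ha
        have h := hb (e ⟨a, ha⟩)
        simp only [Equiv.symm_apply_apply] at h
        exact ⟨hbB, h⟩
      rw [htfin] at hbmem
      exact hbmem
    obtain ⟨b, hbB, hbZ⟩ := hne
    rw [Set.mem_iInter] at hbZ
    refine le_trans (iInf₂_le b hbB) ?_
    refine iSup₂_le fun a ha => ?_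
    exact (hbZ ⟨a, ha⟩).2
  by_contra hcon
  push_neg at hcon
  obtain ⟨γ, h1, h2⟩ := EReal.exists_between_coe_real hcon
  exact absurd (key γ h1) (not_le.2 h2)

lemma minimax_eq {B : Set E} {f : F → E → EReal} {A : Set F}
    (hBne : B.Nonempty) (hBcomp : IsCompact B) (hBconv : Convex ℝ B)
    (hconv : ∀ a ∈ A, ConvIneqOn (f a) B)
    (hlsc : ∀ a ∈ A, LowerSemicontinuousOn (f a) B)
    (hmix : ∀ a0 ∈ A, ∀ a1 ∈ A, ∀ t : ℝ, 0 ≤ t → t ≤ 1 →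
      ∃ a ∈ A, ∀ b ∈ B, ((1 - t : ℝ) : EReal) * f a0 b + (t : EReal) * f a1 b ≤ f a b) :
    (⨅ b ∈ B, ⨆ a ∈ A, f a b) = ⨆ a ∈ A, ⨅ b ∈ B, f a b := by
  refine le_antisymm (minimax_le hBne hBcomp hBconv hconv hlsc hmix) ?_
  refine iSup₂_le fun a ha => le_iInf₂ fun b hb => ?_
  exact le_trans (iInf₂_le b hb) (le_iSup₂ (f := fun a _ => f a b) a ha)

end MinimaxAux

end MinimaxMain

section Application

namespace MinimaxAux

set_option linter.unusedSectionVars false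
set_option maxHeartbeats 1000000

open Filter Topology Set

variable {X Y : Type*} [Fintype X] [Fintype Y]

lemma probSimplex_eq : probSimplex Y = stdSimplex ℝ Y := rfl

lemma ruleSet_eq : ruleSet X Y = Set.pi Set.univ (fun _ : X => probSimplex Y) := by
  ext h
  simp [ruleSet, Set.mem_pi]

lemma ruleSet_isCompact : IsCompact (ruleSet X Y) := by
  rw [ruleSet_eq]
  exact isCompact_univ_pi (fun _ => isCompact_stdSimplex ℝ Y)

lemma ruleSet_convex : Convex ℝ (ruleSet X Y) := by
  rw [ruleSet_eq]
  exact convex_pi (fun _ _ => convex_stdSimplex ℝ Y)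

lemma ruleSet_nonempty [Nonempty Y] : (ruleSet X Y).Nonempty := by
  refine ⟨fun _ _ => (Fintype.card Y : ℝ)⁻¹, fun x => ⟨fun y => by positivity, ?_⟩⟩
  rw [Finset.sum_const, nsmul_eq_mul]
  rw [Finset.card_univ]
  exact mul_inv_cancel₀ (by exact_mod_cast Fintype.card_ne_zero)

variable (L : (Y → ℝ) → Y → EReal)

lemma expLoss_lsc (p : X × Y → ℝ) (hp : ∀ z, 0 ≤ p z)
    (hLlsc : ∀ y, LowerSemicontinuous fun q : Y → ℝ => L q y) :
    LowerSemicontinuous fun h : X → Y → ℝ => expLoss L h p := by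
  have : ∀ z : X × Y, LowerSemicontinuous fun h : X → Y → ℝ =>
      ((p z : ℝ) : EReal) * L (h z.1) z.2 := by
    intro z
    exact lsc_const_mul ((hLlsc z.2).comp (continuous_apply z.1)) (hp z)
  exact lsc_sum Finset.univ _ (fun z _ => this z)

lemma expLoss_convexIneq (p : X × Y → ℝ) (hp : ∀ z, 0 ≤ p z) (hLconv : ConvexInFirst L) :
    ConvIneqOn (fun h : X → Y → ℝ => expLoss L h p) (ruleSet X Y) := by
  intro h0 hh0 h1 hh1 s hs0 hs1
  have hs1' : (0:ℝ) ≤ 1 - s := by linarith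
  have key : ∀ z : X × Y,
      ((p z : ℝ) : EReal) * L ((s • h0 + (1 - s) • h1) z.1) z.2 ≤
        (s : EReal) * (((p z : ℝ) : EReal) * L (h0 z.1) z.2) +
          ((1 - s : ℝ) : EReal) * (((p z : ℝ) : EReal) * L (h1 z.1) z.2) := by
    intro z
    have harg : (s • h0 + (1 - s) • h1) z.1 = s • (h0 z.1) + (1 - s) • (h1 z.1) := rfl
    have hL := hLconv z.2 (h0 z.1) (h1 z.1) (hh0 z.1) (hh1 z.1) s hs0 hs1
    have h2 : ((p z : ℝ) : EReal) * L ((s • h0 + (1 - s) • h1) z.1) z.2 ≤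
        ((p z : ℝ) : EReal) * ((s : EReal) * L (h0 z.1) z.2 +
          ((1 - s : ℝ) : EReal) * L (h1 z.1) z.2) := by
      rw [harg]
      exact mul_le_mul_of_nonneg_left hL (by exact_mod_cast hp z)
    refine h2.trans (le_of_eq ?_)
    rw [smul_distrib (hp z)]
    have comm : ∀ (q r : ℝ) (w : EReal),
        (q : EReal) * ((r : EReal) * w) = (r : EReal) * ((q : EReal) * w) := by
      intro q r w
      rw [← mul_assoc, ← EReal.coe_mul, mul_comm q r, EReal.coe_mul, mul_assoc]
    rw [comm (p z) s, comm (p z) (1 - s)]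
  calc expLoss L (s • h0 + (1 - s) • h1) p
      ≤ ∑ z : X × Y, ((s : EReal) * (((p z : ℝ) : EReal) * L (h0 z.1) z.2) +
          ((1 - s : ℝ) : EReal) * (((p z : ℝ) : EReal) * L (h1 z.1) z.2)) :=
        Finset.sum_le_sum (fun z _ => key z)
    _ = (s : EReal) * expLoss L h0 p + ((1 - s : ℝ) : EReal) * expLoss L h1 p := by
        rw [Finset.sum_add_distrib]
        unfold expLoss
        rw [smul_sum hs0, smul_sum hs1']

lemma expLoss_affine (h : X → Y → ℝ) (p0 p1 : X × Y → ℝ) (hp0 : ∀ z, 0 ≤ p0 z)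
    (hp1 : ∀ z, 0 ≤ p1 z) {t : ℝ} (ht0 : 0 ≤ t) (ht1 : t ≤ 1) :
    expLoss L h ((1 - t) • p0 + t • p1) =
      ((1 - t : ℝ) : EReal) * expLoss L h p0 + (t : EReal) * expLoss L h p1 := by
  have ht1' : (0:ℝ) ≤ 1 - t := by linarith
  have key : ∀ z : X × Y,
      ((((1 - t) • p0 + t • p1) z : ℝ) : EReal) * L (h z.1) z.2 =
        ((1 - t : ℝ) : EReal) * (((p0 z : ℝ) : EReal) * L (h z.1) z.2) +
          (t : EReal) * (((p1 z : ℝ) : EReal) * L (h z.1) z.2) := by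
    intro z
    have harg : (((1 - t) • p0 + t • p1) z : ℝ) = (1 - t) * p0 z + t * p1 z := rfl
    rw [harg, EReal.coe_add]
    rw [EReal.right_distrib_of_nonneg (by exact_mod_cast mul_nonneg ht1' (hp0 z))
      (by exact_mod_cast mul_nonneg ht0 (hp1 z))]
    rw [EReal.coe_mul, EReal.coe_mul, mul_assoc, mul_assoc]
  unfold expLoss
  calc ∑ z : X × Y, ((((1 - t) • p0 + t • p1) z : ℝ) : EReal) * L (h z.1) z.2
      = ∑ z : X × Y, (((1 - t : ℝ) : EReal) * (((p0 z : ℝ) : EReal) * L (h z.1) z.2) +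
          (t : EReal) * (((p1 z : ℝ) : EReal) * L (h z.1) z.2)) :=
        Finset.sum_congr rfl (fun z _ => key z)
    _ = _ := by
        rw [Finset.sum_add_distrib, smul_sum ht1', smul_sum ht0]

end MinimaxAux

end Application

open MinimaxAux

/-- minimax = maximin = maximum entropy, and properties of the
MRC `hU` and the maximum entropy distribution `pU`. -/
theorem statement0 {X Y : Type*} [Fintype X] [Fintype Y] [Nonempty X] [Nonempty Y]
    (L : (Y → ℝ) → Y → EReal)
    (hLlsc : ∀ y, LowerSemicontinuous fun q : Y → ℝ => L q y)
    (hLconv : ConvexInFirst L)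
    (U : Set (X × Y → ℝ)) (hUsub : U ⊆ probSimplex (X × Y))
    (hUconv : Convex ℝ U) (hUcomp : IsCompact U) :
    ((⨅ h ∈ ruleSet X Y, ⨆ p ∈ U, expLoss L h p) =
        ⨆ p ∈ U, ⨅ h ∈ ruleSet X Y, expLoss L h p) ∧
    ((⨅ h ∈ ruleSet X Y, ⨆ p ∈ U, expLoss L h p) = maxEntropy L U) ∧
    (∀ hU ∈ ruleSet X Y,
      (∀ h ∈ ruleSet X Y,
          (⨆ p ∈ U, expLoss L hU p) ≤ ⨆ p ∈ U, expLoss L h p) →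
      ∀ pU ∈ U, (∀ p ∈ U, entropyFn L p ≤ entropyFn L pU) →
        expLoss L hU pU = maxEntropy L U ∧
        (∀ h ∈ ruleSet X Y, expLoss L hU pU ≤ expLoss L h pU) ∧
        (∀ p ∈ U, expLoss L hU p ≤ expLoss L hU pU)) := by
  classical
  have hUnn : ∀ p ∈ U, ∀ z, 0 ≤ p z := fun p hp z => (hUsub hp).1 z
  have hconvf : ∀ p ∈ U, ConvIneqOn (fun h : X → Y → ℝ => expLoss L h p) (ruleSet X Y) :=
    fun p hp => expLoss_convexIneq L p (hUnn p hp) hLconv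
  have hlscf : ∀ p ∈ U, LowerSemicontinuousOn (fun h : X → Y → ℝ => expLoss L h p)
      (ruleSet X Y) :=
    fun p hp => (expLoss_lsc L p (hUnn p hp) hLlsc).lowerSemicontinuousOn _
  have hmixf : ∀ p0 ∈ U, ∀ p1 ∈ U, ∀ t : ℝ, 0 ≤ t → t ≤ 1 →
      ∃ p ∈ U, ∀ h ∈ ruleSet X Y,
        ((1 - t : ℝ) : EReal) * expLoss L h p0 + (t : EReal) * expLoss L h p1 ≤
          expLoss L h p := by
    intro p0 hp0 p1 hp1 t ht0 ht1
    refine ⟨(1 - t) • p0 + t • p1, hUconv hp0 hp1 (by linarith) ht0 (by ring), fun h _ => ?_⟩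
    rw [expLoss_affine L h p0 p1 (hUnn p0 hp0) (hUnn p1 hp1) ht0 ht1]
  have heq : (⨅ h ∈ ruleSet X Y, ⨆ p ∈ U, expLoss L h p) =
      ⨆ p ∈ U, ⨅ h ∈ ruleSet X Y, expLoss L h p :=
    minimax_eq (f := fun (p : X × Y → ℝ) (h : X → Y → ℝ) => expLoss L h p)
      ruleSet_nonempty ruleSet_isCompact ruleSet_convex hconvf hlscf hmixf
  have hME : maxEntropy L U = ⨆ p ∈ U, ⨅ h ∈ ruleSet X Y, expLoss L h p := rfl
  refine ⟨heq, by rw [heq, hME], ?_⟩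
  intro hU hUrule hUmin pU hpU hpUmax
  have hM1 : (⨆ p ∈ U, expLoss L hU p) = maxEntropy L U := by
    apply le_antisymm
    · rw [hME, ← heq]
      exact le_iInf₂ fun h hh => hUmin h hh
    · rw [hME, ← heq]
      exact iInf₂_le hU hUrule
  have hM2 : entropyFn L pU = maxEntropy L U := by
    apply le_antisymm
    · exact le_iSup₂ (f := fun p (_ : p ∈ U) => entropyFn L p) pU hpU
    · show (⨆ p ∈ U, entropyFn L p) ≤ entropyFn L pU
      exact iSup₂_le fun p hp => hpUmax p hp
  have hfinal1 : expLoss L hU pU = maxEntropy L U := by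
    apply le_antisymm
    · rw [← hM1]
      exact le_iSup₂ (f := fun p (_ : p ∈ U) => expLoss L hU p) pU hpU
    · rw [← hM2]
      show (⨅ h ∈ ruleSet X Y, expLoss L h pU) ≤ expLoss L hU pU
      exact iInf₂_le hU hUrule
  refine ⟨hfinal1, fun h hh => ?_, fun p hp => ?_⟩
  · rw [hfinal1, ← hM2]
    show (⨅ h' ∈ ruleSet X Y, expLoss L h' pU) ≤ expLoss L h pU
    exact iInf₂_le h hh
  · rw [hfinal1, ← hM1]
    exact le_iSup₂ (f := fun p (_ : p ∈ U) => expLoss L hU p) p hp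
end
end
end

section
/- Let U ⊆ Δ(X×Y) be a convex and compact uncertainty set, let h^U be a classification rule minimizing h ↦ max_{p ∈ U} ℓ(h,p) over T(X,Y), and suppose the true underlying distribution p* ∈ Δ(X×Y) satisfies p* ∈ U. Then min_{h ∈ T(X,Y)} ℓ(h,p*) ≤ H_ℓ(U) and ℓ(h^U, p*) ≤ H_ℓ(U). If in addition p* maximizes H_ℓ over U, then min_{h ∈ T(X,Y)} ℓ(h,p*) = ℓ(h^U, p*) = H_ℓ(U). -/
open scoped BigOperators Classical

noncomputable section

namespace MRCaux


lemma ereal_coe_sum {ι : Type*} (t : Finset ι) (f : ι → ℝ) :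
    ((∑ i ∈ t, f i : ℝ) : EReal) = ∑ i ∈ t, (f i : EReal) :=
  map_sum (⟨⟨Real.toEReal, EReal.coe_zero⟩, EReal.coe_add⟩ : ℝ →+ EReal) f t

lemma ereal_mul_add_of_nonneg {t : ℝ} (ht : 0 ≤ t) (u v : EReal) :
    (t : EReal) * (u + v) = (t : EReal) * u + (t : EReal) * v := by
  rcases eq_or_lt_of_le ht with h | h
  · simp [← h]
  · induction u with
    | bot => simp [EReal.coe_mul_bot_of_pos h]
    | coe a =>
      induction v with
      | bot => simp [EReal.coe_mul_bot_of_pos h]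
      | coe b => norm_cast; ring
      | top =>
        rw [EReal.coe_add_top, EReal.coe_mul_top_of_pos h, ← EReal.coe_mul,
          EReal.coe_add_top]
    | top =>
      induction v with
      | bot => simp [EReal.coe_mul_bot_of_pos h, EReal.coe_mul_top_of_pos h]
      | coe b =>
        rw [EReal.top_add_coe, EReal.coe_mul_top_of_pos h, ← EReal.coe_mul,
          EReal.top_add_coe]
      | top => rw [EReal.top_add_top, EReal.coe_mul_top_of_pos h, EReal.top_add_top]

lemma ereal_mul_sum_of_nonneg {t : ℝ} (ht : 0 ≤ t) {ι : Type*} (s : Finset ι)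
    (f : ι → EReal) : (t : EReal) * ∑ i ∈ s, f i = ∑ i ∈ s, (t : EReal) * f i := by
  classical
  induction s using Finset.induction_on with
  | empty => simp
  | insert _ _ hne ih =>
    rw [Finset.sum_insert hne, Finset.sum_insert hne, ereal_mul_add_of_nonneg ht, ih]

lemma ereal_sum_mul_of_nonneg {ι : Type*} {s : Finset ι} {a : ι → ℝ}
    (ha : ∀ i ∈ s, 0 ≤ a i) (c : EReal) :
    ((∑ i ∈ s, a i : ℝ) : EReal) * c = ∑ i ∈ s, (a i : EReal) * c := by
  classical
  induction s using Finset.induction_on with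
  | empty => simp
  | @insert j s hne ih =>
    rw [Finset.sum_insert hne, Finset.sum_insert hne, EReal.coe_add,
      EReal.right_distrib_of_nonneg (by exact_mod_cast ha j (Finset.mem_insert_self j s))
        (by
          have : (0:ℝ) ≤ ∑ i ∈ s, a i :=
            Finset.sum_nonneg fun i hi => ha i (Finset.mem_insert_of_mem hi)
          exact_mod_cast this),
      ih fun i hi => ha i (Finset.mem_insert_of_mem hi)]

lemma ereal_sum_ne_bot {ι : Type*} {s : Finset ι} {f : ι → EReal}
    (h : ∀ i ∈ s, f i ≠ ⊥) : ∑ i ∈ s, f i ≠ ⊥ := by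
  classical
  induction s using Finset.induction_on with
  | empty => simp
  | @insert j s hne ih =>
    rw [Finset.sum_insert hne]
    simp only [ne_eq, EReal.add_eq_bot_iff, not_or]
    exact ⟨h j (Finset.mem_insert_self j s),
      ih fun i hi => h i (Finset.mem_insert_of_mem hi)⟩

lemma ereal_sum_eq_top {ι : Type*} {s : Finset ι} {f : ι → EReal}
    (h : ∀ i ∈ s, f i ≠ ⊥) {i0 : ι} (hi0 : i0 ∈ s) (htop : f i0 = ⊤) :
    ∑ i ∈ s, f i = ⊤ := by
  classical
  rw [← Finset.add_sum_erase _ _ hi0, htop]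
  exact EReal.top_add_of_ne_bot
    (ereal_sum_ne_bot fun i hi => h i (Finset.mem_of_mem_erase hi))

lemma ereal_le_of_forall_lt_coe {a b : EReal} (h : ∀ c : ℝ, b < (c : EReal) → a ≤ (c : EReal)) :
    a ≤ b := by
  by_contra hab
  push_neg at hab
  obtain ⟨c, hbc, hca⟩ := EReal.exists_between_coe_real hab
  exact absurd (h c hbc) (not_le.2 hca)

lemma lsc_const_mul {α : Type*} [TopologicalSpace α] {f : α → EReal}
    (hf : LowerSemicontinuous f) {t : ℝ} (ht : 0 ≤ t) :
    LowerSemicontinuous fun x => (t : EReal) * f x := by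
  rcases eq_or_lt_of_le ht with h | h
  · simp only [← h, EReal.coe_zero, zero_mul]
    exact lowerSemicontinuous_const
  · have hcont : Continuous fun a : EReal => (t : EReal) * a := by
      rw [continuous_iff_continuousAt]
      intro a
      have h1 : ContinuousAt (fun p : EReal × EReal => p.1 * p.2) ((t : EReal), a) :=
        EReal.continuousAt_mul (by simp [ne_of_gt h]) (by simp [ne_of_gt h])
          (by simp) (by simp)
      exact h1.comp (continuous_const.prodMk continuous_id).continuousAt
    have hmono : Monotone fun a : EReal => (t : EReal) * a := fun a b hab =>
      mul_le_mul_of_nonneg_left hab (by exact_mod_cast ht)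
    exact hcont.comp_lowerSemicontinuous hf hmono

end MRCaux
namespace MRCaux

variable {X Y : Type*} [Fintype X] [Fintype Y]

lemma probSimplex_eq (Z : Type*) [Fintype Z] : probSimplex Z = stdSimplex ℝ Z := rfl

lemma isCompact_probSimplex (Z : Type*) [Fintype Z] : IsCompact (probSimplex Z) := by
  rw [probSimplex_eq]; exact isCompact_stdSimplex ℝ Z

lemma convex_probSimplex (Z : Type*) [Fintype Z] : Convex ℝ (probSimplex Z) := by
  rw [probSimplex_eq]; exact convex_stdSimplex ℝ Z

lemma ruleSet_eq : ruleSet X Y = Set.pi Set.univ fun _ : X => probSimplex Y := by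
  ext h; simp [ruleSet, Set.mem_pi]

lemma isCompact_ruleSet : IsCompact (ruleSet X Y) := by
  rw [ruleSet_eq]; exact isCompact_univ_pi fun _ => isCompact_probSimplex Y

lemma convex_ruleSet : Convex ℝ (ruleSet X Y) := by
  rw [ruleSet_eq]; exact convex_pi fun _ _ => convex_probSimplex Y

lemma uniform_mem_probSimplex [Nonempty Y] :
    (fun _ : Y => (Fintype.card Y : ℝ)⁻¹) ∈ probSimplex Y := by
  have hcard : 0 < (Fintype.card Y : ℝ) := by
    exact_mod_cast Fintype.card_pos
  constructor
  · intro z; positivity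
  · rw [Finset.sum_const, Finset.card_univ, nsmul_eq_mul, mul_inv_cancel₀ (ne_of_gt hcard)]

lemma nonempty_ruleSet [Nonempty Y] : (ruleSet X Y).Nonempty :=
  ⟨fun _ _ => (Fintype.card Y : ℝ)⁻¹, fun _ => uniform_mem_probSimplex⟩

/-- The bottom dichotomy: if `L (·, y)` takes value `⊥` somewhere on the simplex,
it is `⊥` everywhere on the simplex. -/
lemma bot_dichotomy (L : (Y → ℝ) → Y → EReal)
    (hLlsc : ∀ y, LowerSemicontinuous fun q : Y → ℝ => L q y)
    (hLconv : ConvexInFirst L) {y : Y} {q0 : Y → ℝ} (h0 : q0 ∈ probSimplex Y)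
    (hbot : L q0 y = ⊥) {q : Y → ℝ} (hq : q ∈ probSimplex Y) : L q y = ⊥ := by
  by_contra hne
  have hpath : ∀ t : ℝ, 0 < t → t ≤ 1 → L (t • q0 + (1 - t) • q) y = ⊥ := by
    intro t ht0 ht1
    have := hLconv y q0 q h0 hq t (le_of_lt ht0) ht1
    rw [hbot] at this
    have hmul : (t : EReal) * (⊥ : EReal) = ⊥ := EReal.coe_mul_bot_of_pos ht0
    rw [hmul, EReal.bot_add] at this
    exact le_bot_iff.1 this
  have hlt : (⊥ : EReal) < L q y := bot_lt_iff_ne_bot.2 hne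
  have hev : ∀ᶠ q' in nhds q, (⊥ : EReal) < L q' y := hLlsc y q ⊥ hlt
  have htend : Filter.Tendsto (fun t : ℝ => t • q0 + (1 - t) • q)
      (nhdsWithin 0 (Set.Ioi 0)) (nhds q) := by
    have : Filter.Tendsto (fun t : ℝ => t • q0 + (1 - t) • q) (nhds 0) (nhds q) := by
      have hcont : Continuous fun t : ℝ => t • q0 + (1 - t) • q := by continuity
      have := hcont.tendsto 0
      simpa using this
    exact this.mono_left nhdsWithin_le_nhds
  have hev2 : ∀ᶠ t : ℝ in nhdsWithin 0 (Set.Ioi 0), (⊥ : EReal) < L (t • q0 + (1 - t) • q) y :=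
    htend.eventually hev
  have hev3 : ∀ᶠ t : ℝ in nhdsWithin 0 (Set.Ioi 0), t ∈ Set.Ioc (0:ℝ) 1 :=
    Filter.eventually_iff_exists_mem.2 ⟨Set.Ioc 0 1,
      Ioc_mem_nhdsGT_of_mem (by norm_num : (0:ℝ) ∈ Set.Ico (0:ℝ) 1), fun t ht => ht⟩
  obtain ⟨t, ht1, ht2⟩ := (hev2.and hev3).exists
  rw [hpath t ht2.1 ht2.2] at ht1
  exact lt_irrefl _ ht1

/-- A lower-semicontinuous `EReal` function that is never `⊥` on a compact set is
bounded below by a real number there. -/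
lemma exists_real_lowerBound {α : Type*} [TopologicalSpace α] {K : Set α}
    (hK : IsCompact K) {f : α → EReal} (hf : LowerSemicontinuous f)
    (hne : ∀ x ∈ K, f x ≠ ⊥) : ∃ m : ℝ, ∀ x ∈ K, (m : EReal) ≤ f x := by
  have hcover : K ⊆ ⋃ n : ℕ, {x | ((-(n:ℝ) : ℝ) : EReal) < f x} := by
    intro x hx
    have : (⊥ : EReal) < f x := bot_lt_iff_ne_bot.2 (hne x hx)
    obtain ⟨r, _, hr2⟩ := EReal.exists_between_coe_real this
    obtain ⟨n, hn⟩ := exists_nat_gt (-r)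
    refine Set.mem_iUnion.2 ⟨n, ?_⟩
    have hrr : (-(n:ℝ) : ℝ) < r := by linarith
    exact lt_trans (EReal.coe_lt_coe_iff.2 hrr) hr2
  obtain ⟨t, ht⟩ := hK.elim_finite_subcover _
    (fun n : ℕ => hf.isOpen_preimage ((-(n:ℝ) : ℝ) : EReal)) hcover
  refine ⟨-((t.sup id : ℕ) : ℝ), fun x hx => ?_⟩
  obtain ⟨n, hn, hxn⟩ := Set.mem_iUnion₂.1 (ht hx)
  refine le_of_lt (lt_of_le_of_lt ?_ hxn)
  have h1 : (n : ℝ) ≤ ((t.sup id : ℕ) : ℝ) := by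
    exact_mod_cast Finset.le_sup (f := id) hn
  have h2 : (-((t.sup id : ℕ) : ℝ) : ℝ) ≤ (-(n:ℝ) : ℝ) := by linarith
  exact EReal.coe_le_coe_iff.2 h2

end MRCaux
namespace MRCaux

variable {X Y : Type*} [Fintype X] [Fintype Y]

lemma ereal_coe_mul_ne_bot {c : ℝ} (hc : 0 ≤ c) {x : EReal} (hx : x ≠ ⊥) :
    (c : EReal) * x ≠ ⊥ := by
  rcases eq_or_lt_of_le hc with h | h
  · rw [← h]; simp
  · induction x with
    | bot => exact absurd rfl hx
    | coe a => rw [← EReal.coe_mul]; exact EReal.coe_ne_bot _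
    | top => rw [EReal.coe_mul_top_of_pos h]; exact top_ne_bot

lemma lsc_finset_sum {α ι : Type*} [TopologicalSpace α] (s : Finset ι) (f : ι → α → EReal)
    (hf : ∀ i ∈ s, LowerSemicontinuous (f i)) (hne : ∀ i ∈ s, ∀ x, f i x ≠ ⊥) :
    LowerSemicontinuous fun x => ∑ i ∈ s, f i x := by
  classical
  induction s using Finset.induction_on with
  | empty => simpa using lowerSemicontinuous_const
  | @insert j s hns ih =>
    have h1 : LowerSemicontinuous (f j) := hf j (Finset.mem_insert_self j s)
    have h2 : LowerSemicontinuous fun x => ∑ i ∈ s, f i x :=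
      ih (fun i hi => hf i (Finset.mem_insert_of_mem hi))
        (fun i hi => hne i (Finset.mem_insert_of_mem hi))
    have h3 := h1.add' h2 fun x =>
      EReal.continuousAt_add
        (Or.inr (ereal_sum_ne_bot fun i hi => hne i (Finset.mem_insert_of_mem hi) x))
        (Or.inl (hne j (Finset.mem_insert_self j s) x))
    have : (fun x => ∑ i ∈ insert j s, f i x) = fun x => f j x + ∑ i ∈ s, f i x := by
      funext x; rw [Finset.sum_insert hns]
    rw [this]
    exact h3

lemma expLoss_congr {L L' : (Y → ℝ) → Y → EReal}
    (hL : ∀ q ∈ probSimplex Y, ∀ y, L q y = L' q y) {h : X → Y → ℝ}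
    (hh : h ∈ ruleSet X Y) (p : X × Y → ℝ) : expLoss L h p = expLoss L' h p := by
  unfold expLoss
  exact Finset.sum_congr rfl fun z _ => by rw [hL (h z.1) (hh z.1) z.2]

lemma expLoss_lsc (L : (Y → ℝ) → Y → EReal)
    (hLlsc : ∀ y, LowerSemicontinuous fun q : Y → ℝ => L q y) (p : X × Y → ℝ)
    (hp : ∀ z, 0 ≤ p z) (hne : ∀ (q : Y → ℝ) (z : X × Y), p z ≠ 0 → L q z.2 ≠ ⊥) :
    LowerSemicontinuous fun h : X → Y → ℝ => expLoss L h p := by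
  unfold expLoss
  refine lsc_finset_sum _ (fun z (h : X → Y → ℝ) => (p z : EReal) * L (h z.1) z.2) ?_ ?_
  · intro z _
    exact lsc_const_mul ((hLlsc z.2).comp (continuous_apply z.1)) (hp z)
  · intro z _ h
    by_cases hz : p z = 0
    · simp only [hz]; simp
    · exact ereal_coe_mul_ne_bot (hp z) (hne (h z.1) z hz)

lemma expLoss_combo (L : (Y → ℝ) → Y → EReal) {ι : Type*} (t : Finset ι) (w : ι → ℝ)
    (hw : ∀ i ∈ t, 0 ≤ w i) (p : ι → X × Y → ℝ) (hp : ∀ i ∈ t, ∀ z, 0 ≤ p i z)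
    (h : X → Y → ℝ) :
    expLoss L h (∑ i ∈ t, w i • p i) = ∑ i ∈ t, (w i : EReal) * expLoss L h (p i) := by
  unfold expLoss
  have step1 : ∀ z : X × Y,
      (((∑ i ∈ t, w i • p i) z : ℝ) : EReal) * L (h z.1) z.2
        = ∑ i ∈ t, ((w i * p i z : ℝ) : EReal) * L (h z.1) z.2 := by
    intro z
    have hz : (∑ i ∈ t, w i • p i) z = ∑ i ∈ t, w i * p i z := by
      simp [Finset.sum_apply]
    rw [hz, ereal_sum_mul_of_nonneg fun i hi => mul_nonneg (hw i hi) (hp i hi z)]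
  calc ∑ z : X × Y, (((∑ i ∈ t, w i • p i) z : ℝ) : EReal) * L (h z.1) z.2
      = ∑ z : X × Y, ∑ i ∈ t, ((w i * p i z : ℝ) : EReal) * L (h z.1) z.2 :=
        Finset.sum_congr rfl fun z _ => step1 z
    _ = ∑ i ∈ t, ∑ z : X × Y, ((w i * p i z : ℝ) : EReal) * L (h z.1) z.2 :=
        Finset.sum_comm
    _ = ∑ i ∈ t, (w i : EReal) * ∑ z : X × Y, ((p i z : ℝ) : EReal) * L (h z.1) z.2 := by
        refine Finset.sum_congr rfl fun i hi => ?_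
        rw [ereal_mul_sum_of_nonneg (hw i hi)]
        refine Finset.sum_congr rfl fun z _ => ?_
        rw [EReal.coe_mul, mul_assoc]

lemma expLoss_convexIn (L : (Y → ℝ) → Y → EReal) (hLconv : ConvexInFirst L)
    {p : X × Y → ℝ} (hp : ∀ z, 0 ≤ p z) {h1 h2 : X → Y → ℝ}
    (hh1 : h1 ∈ ruleSet X Y) (hh2 : h2 ∈ ruleSet X Y) {t : ℝ} (ht0 : 0 ≤ t) (ht1 : t ≤ 1) :
    expLoss L (t • h1 + (1 - t) • h2) p
      ≤ (t : EReal) * expLoss L h1 p + ((1 - t : ℝ) : EReal) * expLoss L h2 p := by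
  unfold expLoss
  have step1 : ∀ z : X × Y,
      ((p z : ℝ) : EReal) * L ((t • h1 + (1 - t) • h2) z.1) z.2
        ≤ (t : EReal) * (((p z : ℝ) : EReal) * L (h1 z.1) z.2)
          + ((1 - t : ℝ) : EReal) * (((p z : ℝ) : EReal) * L (h2 z.1) z.2) := by
    intro z
    have harg : (t • h1 + (1 - t) • h2) z.1 = t • h1 z.1 + (1 - t) • h2 z.1 := rfl
    have hc := hLconv z.2 (h1 z.1) (h2 z.1) (hh1 z.1) (hh2 z.1) t ht0 ht1
    rw [harg]
    calc ((p z : ℝ) : EReal) * L (t • h1 z.1 + (1 - t) • h2 z.1) z.2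
        ≤ ((p z : ℝ) : EReal) * ((t : EReal) * L (h1 z.1) z.2
            + ((1 - t : ℝ) : EReal) * L (h2 z.1) z.2) :=
          mul_le_mul_of_nonneg_left hc (by exact_mod_cast hp z)
      _ = ((p z : ℝ) : EReal) * ((t : EReal) * L (h1 z.1) z.2)
            + ((p z : ℝ) : EReal) * (((1 - t : ℝ) : EReal) * L (h2 z.1) z.2) :=
          ereal_mul_add_of_nonneg (hp z) _ _
      _ = (t : EReal) * (((p z : ℝ) : EReal) * L (h1 z.1) z.2)
            + ((1 - t : ℝ) : EReal) * (((p z : ℝ) : EReal) * L (h2 z.1) z.2) := by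
          rw [mul_left_comm, mul_left_comm ((1 - t : ℝ) : EReal)]
  calc ∑ z : X × Y, ((p z : ℝ) : EReal) * L ((t • h1 + (1 - t) • h2) z.1) z.2
      ≤ ∑ z : X × Y, ((t : EReal) * (((p z : ℝ) : EReal) * L (h1 z.1) z.2)
          + ((1 - t : ℝ) : EReal) * (((p z : ℝ) : EReal) * L (h2 z.1) z.2)) :=
        Finset.sum_le_sum fun z _ => step1 z
    _ = ∑ z : X × Y, (t : EReal) * (((p z : ℝ) : EReal) * L (h1 z.1) z.2)
          + ∑ z : X × Y, ((1 - t : ℝ) : EReal) * (((p z : ℝ) : EReal) * L (h2 z.1) z.2) :=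
        Finset.sum_add_distrib
    _ = (t : EReal) * ∑ z : X × Y, ((p z : ℝ) : EReal) * L (h1 z.1) z.2
          + ((1 - t : ℝ) : EReal) * ∑ z : X × Y, ((p z : ℝ) : EReal) * L (h2 z.1) z.2 := by
        rw [ereal_mul_sum_of_nonneg ht0, ereal_mul_sum_of_nonneg (by linarith : (0:ℝ) ≤ 1 - t)]

lemma expLoss_lower (L : (Y → ℝ) → Y → EReal) {m0 : ℝ} {p : X × Y → ℝ}
    (hps : p ∈ probSimplex (X × Y)) {h : X → Y → ℝ}
    (hb : ∀ z : X × Y, p z ≠ 0 → (m0 : EReal) ≤ L (h z.1) z.2) :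
    (m0 : EReal) ≤ expLoss L h p := by
  unfold expLoss
  have step : ∀ z : X × Y, ((p z * m0 : ℝ) : EReal) ≤ ((p z : ℝ) : EReal) * L (h z.1) z.2 := by
    intro z
    by_cases hz : p z = 0
    · rw [hz]; simp
    · rw [EReal.coe_mul]
      exact mul_le_mul_of_nonneg_left (hb z hz) (by exact_mod_cast hps.1 z)
  calc (m0 : EReal) = ((∑ z : X × Y, p z * m0 : ℝ) : EReal) := by
        rw [← Finset.sum_mul, hps.2, one_mul]
    _ = ∑ z : X × Y, ((p z * m0 : ℝ) : EReal) := ereal_coe_sum _ _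
    _ ≤ ∑ z : X × Y, ((p z : ℝ) : EReal) * L (h z.1) z.2 := Finset.sum_le_sum fun z _ => step z

end MRCaux
namespace MRCaux

lemma key_minimax {X Y : Type*} [Fintype X] [Fintype Y] [Nonempty X] [Nonempty Y]
    (L : (Y → ℝ) → Y → EReal)
    (hLlsc : ∀ y, LowerSemicontinuous fun q : Y → ℝ => L q y)
    (hLconv : ConvexInFirst L)
    (U : Set (X × Y → ℝ)) (hUsub : U ⊆ probSimplex (X × Y))
    (hUconv : Convex ℝ U)
    (c : ℝ) (hc : maxEntropy L U < (c : EReal)) :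
    ∃ h ∈ ruleSet X Y, ∀ p ∈ U, expLoss L h p ≤ (c : EReal) := by
  classical
  -- the set of labels where `L` is identically `⊥` on the simplex
  set B : Set Y := {y | ∀ q ∈ probSimplex Y, L q y = ⊥} with hB
  have hBout : ∀ y ∉ B, ∀ q ∈ probSimplex Y, L q y ≠ ⊥ := by
    intro y hy q hq hbotq
    exact hy fun q' hq' => bot_dichotomy L hLlsc hLconv hq hbotq hq'
  -- the modified score function, `⊤` outside the simplex
  set Lt : (Y → ℝ) → Y → EReal := fun q y => if q ∈ probSimplex Y then L q y else ⊤ with hLt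
  have hLt_eq : ∀ q ∈ probSimplex Y, ∀ y, L q y = Lt q y := by
    intro q hq y; simp [hLt, hq]
  have hLt_lsc : ∀ y, LowerSemicontinuous fun q : Y → ℝ => Lt q y := by
    intro y q b hb
    by_cases hq : q ∈ probSimplex Y
    · have hb' : b < L q y := by simpa [hLt, hq] using hb
      refine (hLlsc y q b hb').mono fun q' hq' => lt_of_lt_of_le hq' ?_
      by_cases h' : q' ∈ probSimplex Y
      · simp [hLt, h']
      · simp [hLt, h']
    · have hopen : IsOpen (probSimplex Y)ᶜ :=
        (isCompact_probSimplex Y).isClosed.isOpen_compl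
      have hm : (probSimplex Y)ᶜ ∈ nhds q := hopen.mem_nhds hq
      refine Filter.eventually_of_mem hm fun q' hq' => ?_
      have hq'' : q' ∉ probSimplex Y := hq'
      have h1 : Lt q' y = ⊤ := by simp [hLt, hq'']
      have h2 : Lt q y = ⊤ := by simp [hLt, hq]
      have hb' : b < Lt q y := hb
      show b < Lt q' y
      rw [h1]; rw [h2] at hb'
      exact hb'
  have hLt_ne_bot : ∀ (q : Y → ℝ) (y : Y), y ∉ B → Lt q y ≠ ⊥ := by
    intro q y hy
    by_cases hq : q ∈ probSimplex Y
    · simpa [hLt, hq] using hBout y hy q hq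
    · simp [hLt, hq]
  -- the reduced uncertainty set
  set U' : Set (X × Y → ℝ) := {p ∈ U | ∀ z : X × Y, z.2 ∈ B → p z = 0} with hU'
  have hU'subU : U' ⊆ U := fun p hp => hp.1
  have hbotcase : ∀ p ∈ U, p ∉ U' → ∀ h ∈ ruleSet X Y, expLoss L h p = ⊥ := by
    intro p hp hp' h hh
    have : ¬∀ z : X × Y, z.2 ∈ B → p z = 0 := fun hcon => hp' ⟨hp, hcon⟩
    push_neg at this
    obtain ⟨z, hzB, hzne⟩ := this
    have hterm : ((p z : ℝ) : EReal) * L (h z.1) z.2 = ⊥ := by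
      rw [hzB (h z.1) (hh z.1)]
      exact EReal.coe_mul_bot_of_pos (lt_of_le_of_ne ((hUsub hp).1 z) (Ne.symm hzne))
    unfold expLoss
    rw [← Finset.add_sum_erase Finset.univ _ (Finset.mem_univ z), hterm, EReal.bot_add]
  by_cases hU'e : U'.Nonempty
  swap
  · -- `U'` empty : every `p ∈ U` has expected loss `⊥`
    obtain ⟨h0, hh0⟩ := nonempty_ruleSet (X := X) (Y := Y)
    refine ⟨h0, hh0, fun p hp => ?_⟩
    have : p ∉ U' := fun hcon => hU'e ⟨p, hcon⟩
    rw [hbotcase p hp this h0 hh0]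
    exact bot_le
  -- a uniform real lower bound `m0` for the relevant values of `L`
  have hm : ∀ y : Y, ∃ my : ℝ, y ∉ B → ∀ q ∈ probSimplex Y, (my : EReal) ≤ L q y := by
    intro y
    by_cases hy : y ∈ B
    · exact ⟨0, fun h => absurd hy h⟩
    · obtain ⟨my, hmy⟩ := exists_real_lowerBound (isCompact_probSimplex Y) (hLlsc y)
        (fun q hq => hBout y hy q hq)
      exact ⟨my, fun _ => hmy⟩
  choose mfun hmfun using hm
  set m0 : ℝ := Finset.univ.inf' Finset.univ_nonempty mfun with hm0
  have hbound : ∀ y ∉ B, ∀ q ∈ probSimplex Y, (m0 : EReal) ≤ L q y := by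
    intro y hy q hq
    refine le_trans ?_ (hmfun y hy q hq)
    exact_mod_cast Finset.inf'_le mfun (Finset.mem_univ y)
  have hglow : ∀ p ∈ U', ∀ h ∈ ruleSet X Y, (m0 : EReal) ≤ expLoss L h p := by
    intro p hp h hh
    refine expLoss_lower L (hUsub hp.1) fun z hz => ?_
    have hzB : z.2 ∉ B := fun hcon => hz (hp.2 z hcon)
    exact hbound z.2 hzB (h z.1) (hh z.1)
  have hU'conv : Convex ℝ U' := by
    intro p1 hp1 p2 hp2 a b ha hb hab
    refine ⟨hUconv hp1.1 hp2.1 ha hb hab, fun z hz => ?_⟩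
    simp only [Pi.add_apply, Pi.smul_apply, smul_eq_mul, hp1.2 z hz, hp2.2 z hz]
    ring
  -- main dichotomy on the family of closed sets
  by_cases hA : (ruleSet X Y ∩
      ⋂ i : ↥U', {h : X → Y → ℝ | expLoss Lt h (i : X × Y → ℝ) ≤ (c : EReal)}).Nonempty
  · obtain ⟨h, hh, hhA⟩ := hA
    refine ⟨h, hh, fun p hp => ?_⟩
    by_cases hp' : p ∈ U'
    · have := Set.mem_iInter.1 hhA ⟨p, hp'⟩
      rwa [expLoss_congr hLt_eq hh p]
    · rw [hbotcase p hp hp' h hh]; exact bot_le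
  -- otherwise, finite subfamily with empty intersection
  exfalso
  have hempty : ruleSet X Y ∩
      ⋂ i : ↥U', {h : X → Y → ℝ | expLoss Lt h (i : X × Y → ℝ) ≤ (c : EReal)} = ∅ :=
    Set.not_nonempty_iff_eq_empty.1 hA
  have hclosed : ∀ i : ↥U',
      IsClosed {h : X → Y → ℝ | expLoss Lt h (i : X × Y → ℝ) ≤ (c : EReal)} := by
    intro i
    have hlsc : LowerSemicontinuous fun h : X → Y → ℝ => expLoss Lt h (i : X × Y → ℝ) := by
      refine expLoss_lsc Lt hLt_lsc _ (fun z => (hUsub (hU'subU i.2)).1 z) ?_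
      intro q z hz
      exact hLt_ne_bot q z.2 fun hcon => hz (i.2.2 z hcon)
    have := hlsc.isClosed_preimage ((c : ℝ) : EReal)
    convert this using 1
    rfl
  obtain ⟨t, ht⟩ := isCompact_ruleSet.elim_finite_subfamily_closed _ hclosed hempty
  have htne : t.Nonempty := by
    by_contra hte
    rw [Finset.not_nonempty_iff_eq_empty] at hte
    rw [hte] at ht
    simp only [Finset.notMem_empty, Set.iInter_of_empty, Set.iInter_false,
      Set.iInter_univ, Set.inter_univ] at ht
    exact (nonempty_ruleSet (X := X) (Y := Y)).ne_empty ht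
  have : Nonempty ↥t := htne.to_subtype
  set P : ↥t → (X × Y → ℝ) := fun i => ((i : ↥U') : X × Y → ℝ) with hP
  have hPU' : ∀ i, P i ∈ U' := fun i => (i : ↥U').2
  have hPsimp : ∀ i, P i ∈ probSimplex (X × Y) := fun i => hUsub (hU'subU (hPU' i))
  have hKey : ∀ h ∈ ruleSet X Y, ∃ i : ↥t, (c : EReal) < expLoss L h (P i) := by
    intro h hh
    have : h ∉ ⋂ i ∈ t, {h : X → Y → ℝ | expLoss Lt h ((i : ↥U') : X × Y → ℝ) ≤ (c : EReal)} := by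
      intro hcon
      exact absurd (ht ▸ Set.mem_inter hh hcon) (Set.notMem_empty h)
    simp only [Set.mem_iInter, Set.mem_setOf_eq, not_forall, not_le] at this
    obtain ⟨i, hit, hlt⟩ := this
    refine ⟨⟨i, hit⟩, ?_⟩
    rw [expLoss_congr hLt_eq hh]
    exact hlt
  set nn : ℝ := (Fintype.card ↥t : ℝ) with hnn
  have hnn0 : 0 < nn := by
    rw [hnn]
    exact_mod_cast Fintype.card_pos
  -- lower bound on losses for rules
  have hglow' : ∀ (i : ↥t), ∀ h ∈ ruleSet X Y, (m0 : EReal) ≤ expLoss L h (P i) :=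
    fun i h hh => hglow (P i) (hPU' i) h hh
  have hgnebot : ∀ (i : ↥t), ∀ h ∈ ruleSet X Y, expLoss L h (P i) ≠ ⊥ :=
    fun i h hh => (lt_of_lt_of_le (EReal.bot_lt_coe m0) (hglow' i h hh)).ne'
  -- the two convex sets to be separated
  set S : Set (↥t → ℝ) :=
    {v | ∃ h ∈ ruleSet X Y, ∀ i : ↥t, expLoss L h (P i) ≤ ((v i : ℝ) : EReal)} with hS
  set C : Set (↥t → ℝ) := {v | ∀ i, v i < c} with hC
  -- `maxEntropy` dominates `entropyFn` at any element of `U`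
  have hent_le : ∀ p ∈ U, entropyFn L p ≤ maxEntropy L U := by
    intro p hp
    exact le_iSup₂_of_le p hp le_rfl
  rcases S.eq_empty_or_nonempty with hSe | hSne
  · -- `S = ∅` : every rule has a `⊤` loss in the family; the uniform mixture has `⊤` entropy
    have htop : ∀ h ∈ ruleSet X Y, ∃ i : ↥t, expLoss L h (P i) = ⊤ := by
      intro h hh
      by_contra hcon
      push_neg at hcon
      have : (fun i : ↥t => (expLoss L h (P i)).toReal) ∈ S := by
        refine ⟨h, hh, fun i => ?_⟩
        rw [EReal.coe_toReal (hcon i) (hgnebot i h hh)]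
      rw [hSe] at this
      exact this
    set q0 : X × Y → ℝ := ∑ i : ↥t, (nn⁻¹ : ℝ) • P i with hq0
    have hq0U' : q0 ∈ U' := by
      refine hU'conv.sum_mem (fun i _ => by positivity) ?_ fun i _ => hPU' i
      rw [Finset.sum_const, Finset.card_univ, nsmul_eq_mul, hnn, mul_inv_cancel₀ (ne_of_gt hnn0)]
    have hq0top : ∀ h ∈ ruleSet X Y, expLoss L h q0 = ⊤ := by
      intro h hh
      rw [hq0, expLoss_combo L Finset.univ _ (fun i _ => by positivity) _
        (fun i _ z => (hPsimp i).1 z) h]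
      obtain ⟨i0, hi0⟩ := htop h hh
      refine ereal_sum_eq_top (fun i _ => ereal_coe_mul_ne_bot (by positivity) (hgnebot i h hh))
        (Finset.mem_univ i0) ?_
      rw [hi0]
      exact EReal.coe_mul_top_of_pos (by positivity)
    have hq0ent : (⊤ : EReal) ≤ entropyFn L q0 := by
      unfold entropyFn
      exact le_iInf₂ fun h hh => (hq0top h hh).ge
    have := lt_of_le_of_lt (hq0ent.trans (hent_le q0 (hU'subU hq0U'))) hc
    exact absurd this (by simp)
  · -- `S ≠ ∅` : separate `C` and `S`
    have hSconv : Convex ℝ S := by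
      rintro v ⟨h1, hh1, hv1⟩ w ⟨h2, hh2, hv2⟩ a b ha hb hab
      have hb' : b = 1 - a := by linarith
      subst hb'
      refine ⟨a • h1 + (1 - a) • h2, convex_ruleSet hh1 hh2 ha hb hab, fun i => ?_⟩
      calc expLoss L (a • h1 + (1 - a) • h2) (P i)
          ≤ (a : EReal) * expLoss L h1 (P i)
            + ((1 - a : ℝ) : EReal) * expLoss L h2 (P i) :=
            expLoss_convexIn L hLconv (fun z => (hPsimp i).1 z) hh1 hh2 ha (by linarith)
        _ ≤ (a : EReal) * ((v i : ℝ) : EReal) + ((1 - a : ℝ) : EReal) * ((w i : ℝ) : EReal) :=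
            add_le_add
              (mul_le_mul_of_nonneg_left (hv1 i) (by exact_mod_cast ha))
              (mul_le_mul_of_nonneg_left (hv2 i) (by exact_mod_cast hb))
        _ = (((a • v + (1 - a) • w) i : ℝ) : EReal) := by
            simp only [Pi.add_apply, Pi.smul_apply, smul_eq_mul]
            rw [← EReal.coe_mul, ← EReal.coe_mul, ← EReal.coe_add]
    have hCopen : IsOpen C := by
      have : C = Set.pi Set.univ fun _ : ↥t => Set.Iio c := by
        ext v; simp [hC, Set.mem_pi]
      rw [this]
      exact isOpen_set_pi Set.finite_univ fun i _ => isOpen_Iio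
    have hCconv : Convex ℝ C := by
      have : C = Set.pi Set.univ fun _ : ↥t => Set.Iio c := by
        ext v; simp [hC, Set.mem_pi]
      rw [this]
      exact convex_pi fun i _ => convex_Iio c
    have hdisj : Disjoint C S := by
      rw [Set.disjoint_left]
      rintro v hvC ⟨h, hh, hv⟩
      obtain ⟨i, hi⟩ := hKey h hh
      have h1 : (c : EReal) < ((v i : ℝ) : EReal) := lt_of_lt_of_le hi (hv i)
      have h2 : v i < c := hvC i
      exact absurd (EReal.coe_lt_coe_iff.1 h1) (not_lt.2 (le_of_lt h2))
    obtain ⟨φ, u, hCu, hSu⟩ := geometric_hahn_banach_open hCconv hCopen hSconv hdisj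
    set e : ↥t → (↥t → ℝ) := fun i j => if i = j then (1 : ℝ) else 0 with he
    set lam : ↥t → ℝ := fun i => φ (e i) with hlam
    have hφ : ∀ v : ↥t → ℝ, φ v = ∑ i, v i * lam i := by
      intro v
      conv_lhs => rw [pi_eq_sum_univ v]
      rw [map_sum]
      exact Finset.sum_congr rfl fun i _ => by rw [map_smul, smul_eq_mul]
    have hlampos : ∀ i, 0 ≤ lam i := by
      intro i
      by_contra hneg
      push_neg at hneg
      set K0 : ℝ := φ fun _ => c - 1 with hK0
      set sc : ℝ := max 0 ((u - K0 + 1) / (-lam i)) with hsc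
      have hsc0 : 0 ≤ sc := le_max_left _ _
      have hmem : ((fun _ => c - 1) - sc • e i) ∈ C := by
        intro j
        show (((fun _ => c - 1) : ↥t → ℝ) - sc • e i) j < c
        simp only [Pi.sub_apply, Pi.smul_apply, smul_eq_mul, he]
        by_cases hij : i = j
        · rw [if_pos hij]
          linarith
        · rw [if_neg hij]
          linarith
      have hval : φ ((fun _ => c - 1) - sc • e i) = K0 - sc * lam i := by
        rw [map_sub, map_smul, smul_eq_mul, hK0]
      have hlt := hCu _ hmem
      rw [hval] at hlt
      have hq : (u - K0 + 1) / (-lam i) ≤ sc := le_max_right _ _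
      have hql : u - K0 + 1 ≤ sc * (-lam i) := by
        rw [div_le_iff₀ (by linarith : (0:ℝ) < -lam i)] at hq
        linarith [hq]
      nlinarith
    set s0 : ℝ := ∑ i, lam i with hs0def
    have hs0nonneg : 0 ≤ s0 := Finset.sum_nonneg fun i _ => hlampos i
    have hs0pos : 0 < s0 := by
      rcases eq_or_lt_of_le hs0nonneg with he0 | hpos
      · exfalso
        have hall : ∀ i ∈ Finset.univ, lam i = 0 :=
          (Finset.sum_eq_zero_iff_of_nonneg fun i _ => hlampos i).1 he0.symm
        have hφ0 : ∀ v : ↥t → ℝ, φ v = 0 := by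
          intro v
          rw [hφ]
          exact Finset.sum_eq_zero fun i hi => by rw [hall i hi, mul_zero]
        have h1 : (0 : ℝ) < u := by
          have := hCu (fun _ => c - 1) fun i => show c - 1 < c by linarith
          rwa [hφ0] at this
        obtain ⟨vs, hvs⟩ := hSne
        have h2 : u ≤ 0 := by
          have := hSu vs hvs
          rwa [hφ0] at this
        linarith
      · exact hpos
    have hu : s0 * c ≤ u := by
      have hstep : ∀ ε : ℝ, 0 < ε → s0 * (c - ε) < u := by
        intro ε hε
        have := hCu (fun _ => c - ε) fun i => show c - ε < c by linarith
        rw [hφ] at this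
        have heq : ∑ i : ↥t, (c - ε) * lam i = s0 * (c - ε) := by
          rw [← Finset.mul_sum, ← hs0def, mul_comm]
        rwa [heq] at this
      by_contra hcon
      push_neg at hcon
      have h2 := hstep ((s0 * c - u) / (2 * s0)) (div_pos (by linarith) (by linarith))
      have h3 : (s0 * c - u) / (2 * s0) * s0 = (s0 * c - u) / 2 := by
        field_simp
      nlinarith
    -- pick a real `sreal` strictly between `maxEntropy` and `c`
    obtain ⟨sreal, hs1, hs2⟩ := EReal.exists_between_coe_real hc
    have hs2' : sreal < c := by exact_mod_cast hs2
    set A : ℝ := |c - m0| with hAdef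
    have hA0 : 0 ≤ A := abs_nonneg _
    have hAcm : c - m0 ≤ A := le_abs_self _
    set ε : ℝ := min (1/2) ((c - sreal)/(2*(A+1))) with hεdef
    have hε0 : 0 < ε := lt_min (by norm_num) (div_pos (by linarith) (by linarith))
    have hεhalf : ε ≤ 1/2 := min_le_left _ _
    have hεA : ε ≤ (c - sreal)/(2*(A+1)) := min_le_right _ _
    set T : ℝ := (1-ε)*c + ε*m0 with hTdef
    have hsT : sreal < T := by
      have h1 : ε*(c - m0) ≤ ε*A := mul_le_mul_of_nonneg_left hAcm hε0.le
      have h2 : ε*A ≤ ((c - sreal)/(2*(A+1)))*A := mul_le_mul_of_nonneg_right hεA hA0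
      have h3 : ((c - sreal)/(2*(A+1)))*A ≤ (c - sreal)/2 := by
        rw [div_mul_eq_mul_div, div_le_div_iff₀ (by linarith) (by norm_num)]
        nlinarith
      have h4 : T = c - ε*(c-m0) := by rw [hTdef]; ring
      linarith
    -- the mixture weights
    set w : ↥t → ℝ := fun i => (1-ε) * (lam i / s0) + ε/nn with hwdef
    have hw0 : ∀ i, 0 ≤ w i := fun i =>
      add_nonneg (mul_nonneg (by linarith) (div_nonneg (hlampos i) hs0pos.le))
        (div_nonneg hε0.le hnn0.le)
    have hwpos : ∀ i, 0 < w i := fun i =>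
      add_pos_of_nonneg_of_pos
        (mul_nonneg (by linarith) (div_nonneg (hlampos i) hs0pos.le)) (div_pos hε0 hnn0)
    have hw1 : ∑ i, w i = 1 := by
      simp only [hwdef]
      rw [Finset.sum_add_distrib, ← Finset.mul_sum, ← Finset.sum_div, ← hs0def,
        div_self hs0pos.ne', Finset.sum_const, Finset.card_univ, nsmul_eq_mul, ← hnn]
      field_simp
      ring
    set q : X × Y → ℝ := ∑ i : ↥t, w i • P i with hqdef
    have hqU' : q ∈ U' :=
      hU'conv.sum_mem (fun i _ => hw0 i) hw1 fun i _ => hPU' i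
    have hclaim : ∀ h ∈ ruleSet X Y, ((T : ℝ) : EReal) ≤ expLoss L h q := by
      intro h hh
      rw [hqdef, expLoss_combo L Finset.univ w (fun i _ => hw0 i) P
        (fun i _ z => (hPsimp i).1 z) h]
      by_cases htop2 : ∃ i, expLoss L h (P i) = ⊤
      · obtain ⟨i0, hi0⟩ := htop2
        rw [ereal_sum_eq_top
          (fun i _ => ereal_coe_mul_ne_bot (hw0 i) (hgnebot i h hh))
          (Finset.mem_univ i0) (by rw [hi0]; exact EReal.coe_mul_top_of_pos (hwpos i0))]
        exact le_top
      · push_neg at htop2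
        set v : ↥t → ℝ := fun i => (expLoss L h (P i)).toReal with hvdef
        have hveq : ∀ i, expLoss L h (P i) = ((v i : ℝ) : EReal) := fun i =>
          (EReal.coe_toReal (htop2 i) (hgnebot i h hh)).symm
        have hvS : v ∈ S := ⟨h, hh, fun i => (hveq i).le⟩
        have hvm : ∀ i, m0 ≤ v i := by
          intro i
          have h6 := hglow' i h hh
          rw [hveq i] at h6
          exact_mod_cast h6
        have hsum : ∑ i, (w i : EReal) * expLoss L h (P i)
            = ((∑ i, w i * v i : ℝ) : EReal) := by
          rw [ereal_coe_sum]
          exact Finset.sum_congr rfl fun i _ => by rw [hveq i, ← EReal.coe_mul]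
        rw [hsum]
        refine EReal.coe_le_coe_iff.2 ?_
        have hSv := hSu v hvS
        rw [hφ] at hSv
        have hμv : c * s0 ≤ ∑ i, v i * lam i := le_trans (by linarith) hSv
        have hsplit : ∑ i, w i * v i
            = (1-ε) * ((∑ i, v i * lam i)/s0) + (ε/nn) * ∑ i, v i := by
          have e1 : (1-ε) * ((∑ i, v i * lam i)/s0) + (ε/nn) * ∑ i, v i
              = ∑ i, ((1-ε) * (v i * lam i / s0) + (ε/nn) * v i) := by
            rw [Finset.sum_div, Finset.mul_sum, Finset.mul_sum, ← Finset.sum_add_distrib]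
          rw [e1]
          refine Finset.sum_congr rfl fun i _ => ?_
          simp only [hwdef]
          field_simp
        have hvsum : nn * m0 ≤ ∑ i, v i := by
          have h7 := Finset.card_nsmul_le_sum Finset.univ v m0 fun i _ => hvm i
          rwa [Finset.card_univ, nsmul_eq_mul, ← hnn] at h7
        have h5 : c ≤ (∑ i, v i * lam i)/s0 := by
          rw [le_div_iff₀ hs0pos]
          linarith
        have h6 : (1-ε)*c ≤ (1-ε)*((∑ i, v i * lam i)/s0) :=
          mul_le_mul_of_nonneg_left h5 (by linarith)
        have h7 : (ε/nn)*(nn*m0) ≤ (ε/nn)*(∑ i, v i) :=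
          mul_le_mul_of_nonneg_left hvsum (div_nonneg hε0.le hnn0.le)
        have h8 : (ε/nn)*(nn*m0) = ε*m0 := by
          rw [div_mul_eq_mul_div, mul_div_assoc, mul_comm nn m0, mul_div_assoc,
            div_self hnn0.ne', mul_one]
        linarith
    have hTent : ((T : ℝ) : EReal) ≤ entropyFn L q := by
      unfold entropyFn
      exact le_iInf₂ hclaim
    have hfinal := lt_of_le_of_lt (hTent.trans (hent_le q (hU'subU hqU'))) hs1
    exact absurd (EReal.coe_lt_coe_iff.1 hfinal) (not_lt.2 hsT.le)

end MRCaux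
/-- maximum entropy upper bounds the Bayes risk and the MRC risk
when the true distribution belongs to the uncertainty set. -/
theorem statement1 {X Y : Type*} [Fintype X] [Fintype Y] [Nonempty X] [Nonempty Y]
    (L : (Y → ℝ) → Y → EReal)
    (hLlsc : ∀ y, LowerSemicontinuous fun q : Y → ℝ => L q y)
    (hLconv : ConvexInFirst L)
    (U : Set (X × Y → ℝ)) (hUsub : U ⊆ probSimplex (X × Y))
    (hUconv : Convex ℝ U) (hUcomp : IsCompact U)
    (hU : X → Y → ℝ) (hUrule : hU ∈ ruleSet X Y)
    (hUmin : ∀ h ∈ ruleSet X Y,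
      (⨆ p ∈ U, expLoss L hU p) ≤ ⨆ p ∈ U, expLoss L h p)
    (pstar : X × Y → ℝ) (hpstar : pstar ∈ U) :
    entropyFn L pstar ≤ maxEntropy L U ∧
    expLoss L hU pstar ≤ maxEntropy L U ∧
    ((∀ p ∈ U, entropyFn L p ≤ entropyFn L pstar) →
      entropyFn L pstar = maxEntropy L U ∧
      expLoss L hU pstar = maxEntropy L U) := by
  classical
  have part1 : entropyFn L pstar ≤ maxEntropy L U := by
    unfold maxEntropy
    exact le_iSup₂_of_le pstar hpstar le_rfl
  have part2 : expLoss L hU pstar ≤ maxEntropy L U := by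
    refine MRCaux.ereal_le_of_forall_lt_coe fun c hc => ?_
    obtain ⟨h, hh, hall⟩ := MRCaux.key_minimax L hLlsc hLconv U hUsub hUconv c hc
    calc expLoss L hU pstar
        ≤ ⨆ p ∈ U, expLoss L hU p := le_iSup₂_of_le pstar hpstar le_rfl
      _ ≤ ⨆ p ∈ U, expLoss L h p := hUmin h hh
      _ ≤ (c : EReal) := iSup₂_le hall
  refine ⟨part1, part2, fun hmax => ?_⟩
  have hmaxle : maxEntropy L U ≤ entropyFn L pstar := by
    unfold maxEntropy
    exact iSup₂_le hmax
  have heq1 : entropyFn L pstar = maxEntropy L U := le_antisymm part1 hmaxle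
  have hent_le_loss : entropyFn L pstar ≤ expLoss L hU pstar := by
    unfold entropyFn
    exact iInf₂_le hU hUrule
  exact ⟨heq1, le_antisymm part2 (heq1 ▸ hent_le_loss)⟩
end
end

section
/- Let (x_1,y_1),…,(x_n,y_n) ∈ X×Y, τ_n = (1/n)Σ_{i=1}^n Φ(x_i,y_i), λ ∈ ℝ^m with λ ≥ 0, a_n = τ_n − λ/√n and b_n = τ_n + λ/√n. Then the optimal value of the dual problem 𝒫^{a_n,b_n} equals the infimum, over (μ,ν) ∈ ℝ^m×ℝ such that (y ↦ Φ(x,y)ᵀμ + ν) ∈ 𝓛 for every x ∈ X, of −(1/n)Σ_{i=1}^n Φ(x_i,y_i)ᵀμ − ν + (1/√n)Σ_{i=1}^m λ^{(i)}|μ^{(i)}|. In particular, when λ^{(i)} = λ̄ for all i the penalty term equals (λ̄/√n)·‖μ‖₁, so the dual problem corresponds to L1-regularized learning. -/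
open scoped BigOperators Classical

noncomputable section

/-- for interval estimates centered at the empirical expectation,
the dual problem is an L1-regularized empirical objective. -/
theorem statement3 {X Y : Type*} [Fintype X] [Fintype Y] [Nonempty X] [Nonempty Y]
    {m : ℕ} (L : (Y → ℝ) → Y → EReal)
    (hLlsc : ∀ y, LowerSemicontinuous fun q : Y → ℝ => L q y)
    (hLconv : ConvexInFirst L)
    (Φ : X × Y → Fin m → ℝ)
    (n : ℕ) (hn : 0 < n) (s : Fin n → X × Y)
    (lam : Fin m → ℝ) (hlam : ∀ i, 0 ≤ lam i)
    (τn an bn : Fin m → ℝ)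
    (hτ : ∀ i, τn i = (1 / (n : ℝ)) * ∑ j, Φ (s j) i)
    (han : ∀ i, an i = τn i - lam i / Real.sqrt n)
    (hbn : ∀ i, bn i = τn i + lam i / Real.sqrt n) :
    ((⨅ (μ : Fin m → ℝ) (η : Fin m → ℝ) (ν : ℝ)
        (_ : (∀ x : X, (fun y => (∑ i, Φ (x, y) i * μ i) + ν) ∈ LsetOf L) ∧
          (∀ i, 0 ≤ η i + μ i) ∧ (∀ i, 0 ≤ η i - μ i)),
        (((1/2) * (∑ i, (bn i - an i) * η i) - (1/2) * (∑ i, (bn i + an i) * μ i) - ν : ℝ) :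
          EReal)) =
      ⨅ (μ : Fin m → ℝ) (ν : ℝ)
        (_ : ∀ x : X, (fun y => (∑ i, Φ (x, y) i * μ i) + ν) ∈ LsetOf L),
        ((-((1 / (n : ℝ)) * ∑ j, ∑ i, Φ (s j) i * μ i) - ν +
          (1 / Real.sqrt n) * ∑ i, lam i * |μ i| : ℝ) : EReal)) ∧
    (∀ (μ : Fin m → ℝ) (c : ℝ), (∀ i, lam i = c) →
      (1 / Real.sqrt n) * (∑ i, lam i * |μ i|) = c / Real.sqrt n * ∑ i, |μ i|) := by
  have hA : ∀ η : Fin m → ℝ, (1/2 : ℝ) * (∑ i, (bn i - an i) * η i)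
      = ∑ i, lam i / Real.sqrt n * η i := by
    intro η
    rw [Finset.mul_sum]
    refine Finset.sum_congr rfl fun i _ => ?_
    rw [han, hbn]; ring
  have hB : ∀ μ : Fin m → ℝ, (1/2 : ℝ) * (∑ i, (bn i + an i) * μ i)
      = (1 / (n : ℝ)) * ∑ j, ∑ i, Φ (s j) i * μ i := by
    intro μ
    rw [Finset.mul_sum]
    have h1 : ∀ i ∈ Finset.univ, (1/2 : ℝ) * ((bn i + an i) * μ i)
        = (1 / (n : ℝ)) * ∑ j, Φ (s j) i * μ i := by
      intro i _
      rw [han, hbn, hτ, ← Finset.sum_mul]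
      ring
    rw [Finset.sum_congr rfl h1, ← Finset.mul_sum, Finset.sum_comm]
  have hD : ∀ μ : Fin m → ℝ, (1 / Real.sqrt n) * ∑ i, lam i * |μ i|
      = ∑ i, lam i / Real.sqrt n * |μ i| := by
    intro μ
    rw [Finset.mul_sum]
    refine Finset.sum_congr rfl fun i _ => ?_
    ring
  constructor
  · apply le_antisymm
    · refine le_iInf fun μ => le_iInf fun ν => le_iInf fun hc => ?_
      refine iInf_le_of_le μ (iInf_le_of_le (fun i => |μ i|) (iInf_le_of_le ν
        (iInf_le_of_le ⟨hc, fun i => by linarith [neg_abs_le (μ i)],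
          fun i => by linarith [le_abs_self (μ i)]⟩ (le_of_eq ?_))))
      rw [EReal.coe_eq_coe_iff]
      rw [hA, hB, hD]
      ring
    · refine le_iInf fun μ => le_iInf fun η => le_iInf fun ν => le_iInf fun hc => ?_
      obtain ⟨hfeas, h1, h2⟩ := hc
      refine iInf_le_of_le μ (iInf_le_of_le ν (iInf_le_of_le hfeas ?_))
      rw [EReal.coe_le_coe_iff]
      rw [hA, hB, hD]
      have hsum : ∑ i, lam i / Real.sqrt n * |μ i| ≤ ∑ i, lam i / Real.sqrt n * η i := by
        refine Finset.sum_le_sum fun i _ => ?_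
        have habs : |μ i| ≤ η i := abs_le.2 ⟨by linarith [h1 i], by linarith [h2 i]⟩
        have hpos : 0 ≤ lam i / Real.sqrt n :=
          div_nonneg (hlam i) (Real.sqrt_nonneg _)
        exact mul_le_mul_of_nonneg_left habs hpos
      linarith
  · intro μ c h
    simp_rw [h]
    rw [Finset.mul_sum, Finset.mul_sum]
    refine Finset.sum_congr rfl fun i _ => ?_
    ring
end
end

section
/- Fix α ∈ (1,∞) and set β = α/(α−1) (so β > 1). For a finite nonempty set Y and c : Y → ℝ, the following are equivalent: (i) there exists q ∈ Δ(Y) with c(y) + β·(1 − q(y)^{1/β}) ≤ 0 for all y ∈ Y; (ii) Σ_{y∈Y} (c(y)/β + 1)_+^β ≤ 1, where (t)_+ = max(t,0) and the positive part is computed before the power. Consequently, for the α-loss with score L_α(q,y) = β·(1 − q(y)^{1/β}), the constraint (y ↦ Φ(x,y)ᵀμ + ν) ∈ 𝓛 is equivalent to Σ_{y∈Y} ((Φ(x,y)ᵀμ + ν)/β + 1)_+^β ≤ 1. -/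
open scoped BigOperators Classical

noncomputable section

/-- characterization of the feasibility set `𝓛` for the α-loss. -/
theorem statement10 {X Y : Type*} [Fintype Y] [Nonempty Y]
    {m : ℕ} (Φ : X × Y → Fin m → ℝ)
    (α β : ℝ) (hα : 1 < α) (hβ : β = α / (α - 1)) :
    (∀ c : Y → ℝ,
      (∃ q ∈ probSimplex Y, ∀ y, c y + β * (1 - q y ^ (1 / β)) ≤ 0) ↔
        ∑ y, max (c y / β + 1) 0 ^ β ≤ 1) ∧
    (∀ (x : X) (μ : Fin m → ℝ) (ν : ℝ),
      ((fun y => (∑ i, Φ (x, y) i * μ i) + ν) ∈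
          LsetOf fun (q : Y → ℝ) (y : Y) => ((β * (1 - q y ^ (1 / β)) : ℝ) : EReal)) ↔
        ∑ y, max (((∑ i, Φ (x, y) i * μ i) + ν) / β + 1) 0 ^ β ≤ 1) := by
  have hα0 : (0:ℝ) < α - 1 := by linarith
  have hβ1 : 1 < β := by
    rw [hβ, lt_div_iff₀ hα0]; linarith
  have hβ0 : 0 < β := by linarith
  have key : ∀ c : Y → ℝ,
      (∃ q ∈ probSimplex Y, ∀ y, c y + β * (1 - q y ^ (1 / β)) ≤ 0) ↔
        ∑ y, max (c y / β + 1) 0 ^ β ≤ 1 := by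
    intro c
    constructor
    · rintro ⟨q, ⟨hq0, hq1⟩, hqc⟩
      calc ∑ y, max (c y / β + 1) 0 ^ β ≤ ∑ y, q y := by
            apply Finset.sum_le_sum
            intro y _
            have h1 : c y / β + 1 ≤ q y ^ (1/β) := by
              rw [div_add' _ _ _ (ne_of_gt hβ0), div_le_iff₀ hβ0]
              nlinarith [hqc y]
            have h2 : max (c y / β + 1) 0 ≤ q y ^ (1/β) :=
              max_le h1 (Real.rpow_nonneg (hq0 y) _)
            calc max (c y / β + 1) 0 ^ β ≤ (q y ^ (1/β)) ^ β :=
                  Real.rpow_le_rpow (le_max_right _ _) h2 (le_of_lt hβ0)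
              _ = q y := by
                  rw [← Real.rpow_mul (hq0 y), one_div_mul_cancel (ne_of_gt hβ0),
                    Real.rpow_one]
        _ = 1 := hq1
    · intro hS
      set S := ∑ y, max (c y / β + 1) 0 ^ β with hSdef
      have hn : (0:ℝ) < Fintype.card Y := by
        exact_mod_cast Fintype.card_pos
      refine ⟨fun y => max (c y / β + 1) 0 ^ β + (1 - S) / Fintype.card Y, ⟨?_, ?_⟩, ?_⟩
      · intro y
        have h1 : (0:ℝ) ≤ max (c y / β + 1) 0 ^ β :=
          Real.rpow_nonneg (le_max_right _ _) _
        have h2 : (0:ℝ) ≤ (1 - S) / Fintype.card Y :=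
          div_nonneg (by linarith) (le_of_lt hn)
        linarith
      · rw [Finset.sum_add_distrib, Finset.sum_const, Finset.card_univ, nsmul_eq_mul,
          ← hSdef]
        have h9 : (Fintype.card Y : ℝ) * ((1 - S) / Fintype.card Y) = 1 - S := by
          field_simp
        linarith
      · intro y
        have h1 : max (c y / β + 1) 0 ^ β ≤ max (c y / β + 1) 0 ^ β + (1 - S) / Fintype.card Y := by
          have h2 : (0:ℝ) ≤ (1 - S) / Fintype.card Y :=
            div_nonneg (by linarith) (le_of_lt hn)
          linarith
        have h3 : (max (c y / β + 1) 0 ^ β) ^ (1/β) ≤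
            (max (c y / β + 1) 0 ^ β + (1 - S) / Fintype.card Y) ^ (1/β) :=
          Real.rpow_le_rpow (Real.rpow_nonneg (le_max_right _ _) _) h1
            (by positivity)
        have h4 : (max (c y / β + 1) 0 ^ β) ^ (1/β) = max (c y / β + 1) 0 := by
          rw [← Real.rpow_mul (le_max_right _ _), mul_one_div_cancel (ne_of_gt hβ0),
            Real.rpow_one]
        have h5 : c y / β + 1 ≤ (max (c y / β + 1) 0 ^ β + (1 - S) / Fintype.card Y) ^ (1/β) := by
          calc c y / β + 1 ≤ max (c y / β + 1) 0 := le_max_left _ _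
            _ = _ := h4.symm
            _ ≤ _ := h3
        have h7 := mul_le_mul_of_nonneg_left h5 hβ0.le
        have h8 : β * (c y / β + 1) = c y + β := by field_simp
        nlinarith
  refine ⟨key, fun x μ ν => ?_⟩
  rw [← key (fun y => (∑ i, Φ (x, y) i * μ i) + ν)]
  simp only [LsetOf, Set.mem_setOf_eq, ← EReal.coe_add]
  constructor
  · rintro ⟨q, hq, h⟩
    exact ⟨q, hq, fun y => by have := h y; exact_mod_cast this⟩
  · rintro ⟨q, hq, h⟩
    exact ⟨q, hq, fun y => by exact_mod_cast h y⟩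
end
end

section
/- For a finite nonempty set Y and c : Y → ℝ, there exists q ∈ Δ(Y) with c(y) + 1 − q(y) ≤ 0 for all y ∈ Y if and only if Σ_{y∈Y} (c(y) + 1)_+ ≤ 1, where (t)_+ = max(t,0). Consequently, for the 0-1 loss with score L(q,y) = 1 − q(y), the constraint (y ↦ Φ(x,y)ᵀμ + ν) ∈ 𝓛 is equivalent to Σ_{y∈Y} (Φ(x,y)ᵀμ + ν + 1)_+ ≤ 1. -/
open scoped BigOperators Classical

noncomputable section

lemma key_lemma {Y : Type*} [Fintype Y] [Nonempty Y] (c : Y → ℝ) :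
    (∃ q ∈ probSimplex Y, ∀ y, c y + 1 - q y ≤ 0) ↔
      ∑ y, max (c y + 1) 0 ≤ 1 := by
  constructor
  · rintro ⟨q, ⟨hq0, hq1⟩, h⟩
    calc ∑ y, max (c y + 1) 0 ≤ ∑ y, q y := by
          apply Finset.sum_le_sum
          intro y _
          exact max_le (by linarith [h y]) (hq0 y)
      _ = 1 := hq1
  · intro hS
    set S := ∑ y, max (c y + 1) 0 with hSdef
    have hn : (0 : ℝ) < Fintype.card Y := by
      exact_mod_cast Fintype.card_pos
    refine ⟨fun y => max (c y + 1) 0 + (1 - S) / Fintype.card Y, ⟨?_, ?_⟩, ?_⟩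
    · intro y
      have h1 : (0:ℝ) ≤ max (c y + 1) 0 := le_max_right _ _
      have h2 : (0:ℝ) ≤ (1 - S) / Fintype.card Y :=
        div_nonneg (by linarith) hn.le
      linarith
    · rw [Finset.sum_add_distrib, Finset.sum_const, ← hSdef, Finset.card_univ, nsmul_eq_mul]
      field_simp
      ring
    · intro y
      have h2 : (0:ℝ) ≤ (1 - S) / Fintype.card Y :=
        div_nonneg (by linarith) hn.le
      have h1 : c y + 1 ≤ max (c y + 1) 0 := le_max_left _ _
      linarith

/-- characterization of the feasibility set `𝓛` for the 0-1 loss. -/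
theorem statement11 {X Y : Type*} [Fintype Y] [Nonempty Y]
    {m : ℕ} (Φ : X × Y → Fin m → ℝ) :
    (∀ c : Y → ℝ,
      (∃ q ∈ probSimplex Y, ∀ y, c y + 1 - q y ≤ 0) ↔
        ∑ y, max (c y + 1) 0 ≤ 1) ∧
    (∀ (x : X) (μ : Fin m → ℝ) (ν : ℝ),
      ((fun y => (∑ i, Φ (x, y) i * μ i) + ν) ∈
          LsetOf fun (q : Y → ℝ) (y : Y) => ((1 - q y : ℝ) : EReal)) ↔
        ∑ y, max ((∑ i, Φ (x, y) i * μ i) + ν + 1) 0 ≤ 1) := by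
  constructor
  · exact fun c => key_lemma c
  · intro x μ ν
    rw [show ((fun y => (∑ i, Φ (x, y) i * μ i) + ν) ∈
          LsetOf fun (q : Y → ℝ) (y : Y) => ((1 - q y : ℝ) : EReal)) ↔
        (∃ q ∈ probSimplex Y, ∀ y, ((∑ i, Φ (x, y) i * μ i) + ν) + 1 - q y ≤ 0) from ?_]
    · exact key_lemma _
    · unfold LsetOf
      simp only [Set.mem_setOf_eq]
      constructor
      · rintro ⟨q, hq, h⟩
        refine ⟨q, hq, fun y => ?_⟩
        have := h y
        rw [← EReal.coe_add] at this
        have : ((∑ i, Φ (x, y) i * μ i) + ν + (1 - q y) : ℝ) ≤ (0:ℝ) := by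
          exact_mod_cast this
        linarith
      · rintro ⟨q, hq, h⟩
        refine ⟨q, hq, fun y => ?_⟩
        have := h y
        rw [← EReal.coe_add]
        exact_mod_cast (by linarith : ((∑ i, Φ (x, y) i * μ i) + ν + (1 - q y) : ℝ) ≤ 0)
end
end

section
/- For a finite nonempty set Y and c : Y → ℝ, there exists q ∈ Δ(Y) with q(y) > 0 and c(y) − log q(y) ≤ 0 for all y ∈ Y if and only if Σ_{y∈Y} exp(c(y)) ≤ 1. Consequently, for the log-loss with score L(q,y) = −log q(y) (with value +∞ when q(y) = 0), the constraint (y ↦ Φ(x,y)ᵀμ + ν) ∈ 𝓛 is equivalent to Σ_{y∈Y} exp(Φ(x,y)ᵀμ + ν) ≤ 1. -/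
open scoped BigOperators Classical

noncomputable section

/-- characterization of the feasibility set `𝓛` for the log-loss. -/
theorem statement12 {X Y : Type*} [Fintype Y] [Nonempty Y]
    {m : ℕ} (Φ : X × Y → Fin m → ℝ) :
    (∀ c : Y → ℝ,
      (∃ q ∈ probSimplex Y, ∀ y, 0 < q y ∧ c y - Real.log (q y) ≤ 0) ↔
        ∑ y, Real.exp (c y) ≤ 1) ∧
    (∀ (x : X) (μ : Fin m → ℝ) (ν : ℝ),
      ((fun y => (∑ i, Φ (x, y) i * μ i) + ν) ∈
          LsetOf fun (q : Y → ℝ) (y : Y) =>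
            if q y = 0 then (⊤ : EReal) else ((-Real.log (q y) : ℝ) : EReal)) ↔
        ∑ y, Real.exp ((∑ i, Φ (x, y) i * μ i) + ν) ≤ 1) := by
  have key : ∀ c : Y → ℝ,
      (∃ q ∈ probSimplex Y, ∀ y, 0 < q y ∧ c y - Real.log (q y) ≤ 0) ↔
        ∑ y, Real.exp (c y) ≤ 1 := by
    intro c
    constructor
    · rintro ⟨q, ⟨hq0, hq1⟩, h⟩
      calc ∑ y, Real.exp (c y) ≤ ∑ y, q y := by
            apply Finset.sum_le_sum
            intro y _
            have hpos := (h y).1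
            have hle : c y ≤ Real.log (q y) := by linarith [(h y).2]
            exact (Real.le_log_iff_exp_le hpos).mp hle
        _ = 1 := hq1
    · intro hS
      have hn : (0:ℝ) < (Fintype.card Y : ℝ) := by
        exact_mod_cast Fintype.card_pos
      set S := ∑ z, Real.exp (c z) with hSdef
      refine ⟨fun y => Real.exp (c y) + (1 - S) / (Fintype.card Y : ℝ), ⟨?_, ?_⟩, ?_⟩
      · intro y
        have : 0 ≤ (1 - S) / (Fintype.card Y : ℝ) := by
          apply div_nonneg (by linarith) hn.le
        have := Real.exp_pos (c y)
        positivity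
      · rw [Finset.sum_add_distrib, Finset.sum_const, Finset.card_univ,
          nsmul_eq_mul, ← hSdef]
        field_simp
        ring
      · intro y
        have hq : 0 < Real.exp (c y) + (1 - S) / (Fintype.card Y : ℝ) := by
          have : 0 ≤ (1 - S) / (Fintype.card Y : ℝ) := by
            apply div_nonneg (by linarith) hn.le
          have := Real.exp_pos (c y)
          positivity
        refine ⟨hq, ?_⟩
        have hle : Real.exp (c y) ≤ Real.exp (c y) + (1 - S) / (Fintype.card Y : ℝ) := by
          have : 0 ≤ (1 - S) / (Fintype.card Y : ℝ) := by
            apply div_nonneg (by linarith) hn.le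
          linarith
        have := (Real.le_log_iff_exp_le hq).mpr hle
        linarith
  refine ⟨key, ?_⟩
  intro x μ ν
  rw [← key fun y => (∑ i, Φ (x, y) i * μ i) + ν]
  constructor
  · rintro ⟨q, hqS, h⟩
    refine ⟨q, hqS, fun y => ?_⟩
    have hy := h y
    by_cases h0 : q y = 0
    · simp only [h0, if_true, eq_self_iff_true] at hy
      rw [EReal.add_top_of_ne_bot (EReal.coe_ne_bot _)] at hy
      exact absurd hy (by simp)
    · have hpos : 0 < q y := lt_of_le_of_ne (hqS.1 y) (Ne.symm h0)
      refine ⟨hpos, ?_⟩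
      simp only [if_neg h0] at hy
      rw [← EReal.coe_add] at hy
      have : ((∑ i, Φ (x, y) i * μ i) + ν + -Real.log (q y) : ℝ) ≤ (0:ℝ) := by
        exact_mod_cast hy
      linarith
  · rintro ⟨q, hqS, h⟩
    refine ⟨q, hqS, fun y => ?_⟩
    have hpos := (h y).1
    have hle := (h y).2
    simp only
    rw [if_neg hpos.ne', ← EReal.coe_add]
    exact_mod_cast (by linarith : ((∑ i, Φ (x, y) i * μ i) + ν + -Real.log (q y) : ℝ) ≤ 0)
end
end

section
/- For a finite nonempty set Y and v : Y → ℝ, sup{ν ∈ ℝ : Σ_{y∈Y} (v(y) + ν + 1)_+ ≤ 1} = min over nonempty subsets C ⊆ Y of (1 − Σ_{y∈C} (v(y) + 1))/|C|, where (t)_+ = max(t,0). Consequently, for the 0-1 loss with score L(q,y) = 1 − q(y), the function φ_{0-1}(μ,x) = sup{ν ∈ ℝ : (y ↦ Φ(x,y)ᵀμ + ν) ∈ 𝓛} satisfies φ_{0-1}(μ,x) = min over nonempty subsets C ⊆ Y of (1 − Σ_{y∈C} (Φ(x,y)ᵀμ + 1))/|C|. -/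
open scoped BigOperators Classical

noncomputable section

lemma key_sSup {Y : Type*} [Fintype Y] [Nonempty Y] (v : Y → ℝ) :
    sSup {ν : ℝ | ∑ y, max (v y + ν + 1) 0 ≤ 1} =
      ⨅ C : {C : Finset Y // C.Nonempty},
        (1 - ∑ y ∈ C.1, (v y + 1)) / (C.1.card : ℝ) := by
  set S : Set ℝ := {ν : ℝ | ∑ y, max (v y + ν + 1) 0 ≤ 1} with hS
  set g : {C : Finset Y // C.Nonempty} → ℝ :=
    fun C => (1 - ∑ y ∈ C.1, (v y + 1)) / (C.1.card : ℝ) with hg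
  haveI : Nonempty {C : Finset Y // C.Nonempty} := ⟨⟨Finset.univ, Finset.univ_nonempty⟩⟩
  -- ub: every element of S is ≤ g C for every C
  have hub : ∀ ν ∈ S, ∀ C : {C : Finset Y // C.Nonempty}, ν ≤ g C := by
    intro ν hν C
    have hcard : (0 : ℝ) < (C.1.card : ℝ) := by
      exact_mod_cast Finset.card_pos.mpr C.2
    have h1 : ∑ y ∈ C.1, (v y + ν + 1) ≤ 1 := by
      calc ∑ y ∈ C.1, (v y + ν + 1) ≤ ∑ y ∈ C.1, max (v y + ν + 1) 0 :=
            Finset.sum_le_sum fun y _ => le_max_left _ _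
        _ ≤ ∑ y, max (v y + ν + 1) 0 :=
            Finset.sum_le_sum_of_subset_of_nonneg (Finset.subset_univ _)
              (fun y _ _ => le_max_right _ _)
        _ ≤ 1 := hν
    have h2 : ∑ y ∈ C.1, (v y + ν + 1) = (∑ y ∈ C.1, (v y + 1)) + (C.1.card : ℝ) * ν := by
      have : ∀ y ∈ C.1, v y + ν + 1 = (v y + 1) + ν := fun y _ => by ring
      rw [Finset.sum_congr rfl this, Finset.sum_add_distrib, Finset.sum_const,
        nsmul_eq_mul]
    rw [hg]
    rw [le_div_iff₀ hcard]
    nlinarith [h1, h2]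
  -- membership: any lower bound of g is in S
  have hmem : ∀ ν : ℝ, (∀ C : {C : Finset Y // C.Nonempty}, ν ≤ g C) → ν ∈ S := by
    intro ν hν
    set D : Finset Y := Finset.univ.filter (fun y => 0 < v y + ν + 1) with hD
    have hsum : ∑ y, max (v y + ν + 1) 0 = ∑ y ∈ D, (v y + ν + 1) := by
      rw [hD, Finset.sum_filter]
      apply Finset.sum_congr rfl
      intro y _
      by_cases h : 0 < v y + ν + 1
      · simp [h, max_eq_left h.le]
      · simp [h, max_eq_right (le_of_not_gt h)]
    rcases D.eq_empty_or_nonempty with hDe | hDne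
    · simp only [hS, Set.mem_setOf_eq]
      rw [hsum, hDe, Finset.sum_empty]; norm_num
    · have hcard : (0 : ℝ) < (D.card : ℝ) := by
        exact_mod_cast Finset.card_pos.mpr hDne
      have h3 := hν ⟨D, hDne⟩
      rw [hg, le_div_iff₀ hcard] at h3
      have h2 : ∑ y ∈ D, (v y + ν + 1) = (∑ y ∈ D, (v y + 1)) + (D.card : ℝ) * ν := by
        have : ∀ y ∈ D, v y + ν + 1 = (v y + 1) + ν := fun y _ => by ring
        rw [Finset.sum_congr rfl this, Finset.sum_add_distrib, Finset.sum_const,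
          nsmul_eq_mul]
      simp only [hS, Set.mem_setOf_eq]
      rw [hsum]
      nlinarith [h3, h2]
  -- the infimum is attained
  obtain ⟨C₀, hC₀⟩ := Finite.exists_min g
  have hbddg : BddBelow (Set.range g) := (Set.finite_range g).bddBelow
  have hinf : (⨅ C, g C) = g C₀ :=
    le_antisymm (ciInf_le hbddg C₀) (le_ciInf hC₀)
  have hin : (⨅ C, g C) ∈ S := by
    apply hmem
    intro C
    exact le_trans (le_of_eq hinf) (hC₀ C)
  have hbddS : BddAbove S := ⟨g C₀, fun ν hν => hub ν hν C₀⟩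
  apply le_antisymm
  · exact csSup_le ⟨_, hin⟩ fun ν hν => le_ciInf (hub ν hν)
  · exact le_csSup hbddS hin

lemma Lset01_iff {Y : Type*} [Fintype Y] [Nonempty Y] (c : Y → ℝ) :
    c ∈ LsetOf (fun (q : Y → ℝ) (y : Y) => ((1 - q y : ℝ) : EReal)) ↔
      ∑ y, max (c y + 1) 0 ≤ 1 := by
  constructor
  · rintro ⟨q, ⟨hq0, hq1⟩, hle⟩
    have h : ∀ y, c y + 1 ≤ q y := by
      intro y
      have := hle y
      rw [← EReal.coe_add] at this
      have : c y + (1 - q y) ≤ 0 := by exact_mod_cast this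
      linarith
    calc ∑ y, max (c y + 1) 0 ≤ ∑ y, q y :=
          Finset.sum_le_sum fun y _ => max_le (h y) (hq0 y)
      _ = 1 := hq1
  · intro h
    have hcard : (0 : ℝ) < (Fintype.card Y : ℝ) := by
      exact_mod_cast Fintype.card_pos
    set δ : ℝ := (1 - ∑ y, max (c y + 1) 0) / (Fintype.card Y : ℝ) with hδ
    have hδ0 : 0 ≤ δ := div_nonneg (by linarith) hcard.le
    refine ⟨fun y => max (c y + 1) 0 + δ, ⟨fun y => by positivity, ?_⟩, ?_⟩
    · rw [Finset.sum_add_distrib, Finset.sum_const, nsmul_eq_mul, hδ,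
        Finset.card_univ, mul_div_cancel₀ _ (ne_of_gt hcard)]
      ring
    · intro y
      rw [← EReal.coe_add]
      have : c y + (1 - (max (c y + 1) 0 + δ)) ≤ 0 := by
        have := le_max_left (c y + 1) 0
        linarith
      exact_mod_cast this

/-- closed form of `φ` for the 0-1 loss as a minimum over
nonempty subsets of labels. -/
theorem statement18 {X Y : Type*} [Fintype Y] [Nonempty Y]
    {m : ℕ} (Φ : X × Y → Fin m → ℝ) :
    (∀ v : Y → ℝ,
      sSup {ν : ℝ | ∑ y, max (v y + ν + 1) 0 ≤ 1} =
        ⨅ C : {C : Finset Y // C.Nonempty},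
          (1 - ∑ y ∈ C.1, (v y + 1)) / (C.1.card : ℝ)) ∧
    (∀ (x : X) (μ : Fin m → ℝ),
      phiFn (fun (q : Y → ℝ) (y : Y) => ((1 - q y : ℝ) : EReal)) Φ μ x =
        ⨅ C : {C : Finset Y // C.Nonempty},
          (1 - ∑ y ∈ C.1, ((∑ i, Φ (x, y) i * μ i) + 1)) / (C.1.card : ℝ)) := by
  refine ⟨key_sSup, ?_⟩
  intro x μ
  unfold phiFn
  have hset : {ν : ℝ | (fun y => (∑ i, Φ (x, y) i * μ i) + ν) ∈
      LsetOf (fun (q : Y → ℝ) (y : Y) => ((1 - q y : ℝ) : EReal))} =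
      {ν : ℝ | ∑ y, max ((∑ i, Φ (x, y) i * μ i) + ν + 1) 0 ≤ 1} := by
    ext ν
    simp only [Set.mem_setOf_eq, Lset01_iff]
  rw [hset, key_sSup (fun y => ∑ i, Φ (x, y) i * μ i)]
end
end

section
/- For a finite nonempty set Y and v : Y → ℝ, sup{ν ∈ ℝ : Σ_{y∈Y} exp(v(y) + ν) ≤ 1} = −log Σ_{y∈Y} exp(v(y)), and the supremum is attained. Consequently, for the log-loss with score L(q,y) = −log q(y) (with value +∞ when q(y) = 0), the function φ_log(μ,x) = sup{ν ∈ ℝ : (y ↦ Φ(x,y)ᵀμ + ν) ∈ 𝓛} satisfies φ_log(μ,x) = −log Σ_{y∈Y} exp(Φ(x,y)ᵀμ); moreover, if a classification rule h satisfies h(y|x) ≥ exp(Φ(x,y)ᵀμ + φ_log(μ,x)) for all y ∈ Y, then equality holds, i.e., h(y|x) = exp(Φ(x,y)ᵀμ)/Σ_{i∈Y} exp(Φ(x,i)ᵀμ). -/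
open scoped BigOperators Classical

noncomputable section

/-- Auxiliary: membership in `𝓛` for the log-loss -/
lemma mem_Lset_log_iff {Y : Type*} [Fintype Y] [Nonempty Y] (c : Y → ℝ) :
    c ∈ LsetOf (fun (q : Y → ℝ) (y : Y) =>
        if q y = 0 then (⊤ : EReal) else ((-Real.log (q y) : ℝ) : EReal)) ↔
      ∑ y, Real.exp (c y) ≤ 1 := by
  constructor
  · rintro ⟨q, ⟨hq0, hq1⟩, hcond⟩
    have hle : ∀ y, Real.exp (c y) ≤ q y := by
      intro y
      have h := hcond y
      dsimp only at h
      by_cases hz : q y = 0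
      · simp [hz] at h
      · rw [if_neg hz, ← EReal.coe_add] at h
        have h' : c y + (-Real.log (q y)) ≤ 0 := by exact_mod_cast h
        have hqpos : 0 < q y := lt_of_le_of_ne (hq0 y) (Ne.symm hz)
        calc Real.exp (c y) ≤ Real.exp (Real.log (q y)) := Real.exp_le_exp.2 (by linarith)
          _ = q y := Real.exp_log hqpos
    calc ∑ y, Real.exp (c y) ≤ ∑ y, q y := Finset.sum_le_sum fun y _ => hle y
      _ = 1 := hq1
  · intro hS
    set S := ∑ y, Real.exp (c y) with hSdef
    set n : ℝ := (Fintype.card Y : ℝ) with hndef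
    have hn : 0 < n := by
      have := Fintype.card_pos (α := Y); positivity
    have hnonneg : 0 ≤ (1 - S) / n := div_nonneg (by linarith) hn.le
    refine ⟨fun y => Real.exp (c y) + (1 - S) / n, ⟨?_, ?_⟩, ?_⟩
    · intro y
      have := (Real.exp_pos (c y)).le
      linarith
    · rw [Finset.sum_add_distrib, Finset.sum_const]
      simp only [← hSdef]
      rw [nsmul_eq_mul]
      have : (((Finset.univ : Finset Y).card : ℕ) : ℝ) = n := by rw [hndef]; rfl
      rw [this]
      field_simp
      ring
    · intro y
      have hqpos : 0 < Real.exp (c y) + (1 - S) / n := by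
        have := Real.exp_pos (c y); linarith
      dsimp only
      rw [if_neg hqpos.ne', ← EReal.coe_add]
      have hge : Real.exp (c y) ≤ Real.exp (c y) + (1 - S) / n := by linarith
      have hlog : c y ≤ Real.log (Real.exp (c y) + (1 - S) / n) := by
        calc c y = Real.log (Real.exp (c y)) := (Real.log_exp _).symm
          _ ≤ _ := Real.log_le_log (Real.exp_pos _) hge
      exact_mod_cast (by linarith : c y + (-Real.log (Real.exp (c y) + (1 - S) / n)) ≤ 0)

lemma sup_aux {Y : Type*} [Fintype Y] [Nonempty Y] (v : Y → ℝ) :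
    {ν : ℝ | ∑ y, Real.exp (v y + ν) ≤ 1} =
      Set.Iic (-Real.log (∑ y, Real.exp (v y))) := by
  have hS : 0 < ∑ y, Real.exp (v y) :=
    Finset.sum_pos (fun y _ => Real.exp_pos _) Finset.univ_nonempty
  ext ν
  simp only [Set.mem_setOf_eq, Set.mem_Iic]
  have hrw : ∑ y, Real.exp (v y + ν) = (∑ y, Real.exp (v y)) * Real.exp ν := by
    rw [Finset.sum_mul]; congr 1; ext y; rw [Real.exp_add]
  rw [hrw]
  constructor
  · intro h
    have hexp : Real.exp ν ≤ (∑ y, Real.exp (v y))⁻¹ := by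
      rw [← one_div, le_div_iff₀ hS]
      linarith [h, mul_comm (∑ y, Real.exp (v y)) (Real.exp ν)]
    have := Real.log_le_log (Real.exp_pos _) hexp
    rwa [Real.log_exp, Real.log_inv] at this
  · intro h
    have : Real.exp ν ≤ Real.exp (-Real.log (∑ y, Real.exp (v y))) := Real.exp_le_exp.2 h
    rw [Real.exp_neg, Real.exp_log hS] at this
    calc (∑ y, Real.exp (v y)) * Real.exp ν ≤ (∑ y, Real.exp (v y)) * (∑ y, Real.exp (v y))⁻¹ :=
          mul_le_mul_of_nonneg_left this hS.le
      _ = 1 := mul_inv_cancel₀ hS.ne'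

/-- closed form of `φ` for the log-loss, and the resulting
softmax form of the MRC. -/
theorem statement19 {X Y : Type*} [Fintype Y] [Nonempty Y]
    {m : ℕ} (Φ : X × Y → Fin m → ℝ) :
    (∀ v : Y → ℝ,
      sSup {ν : ℝ | ∑ y, Real.exp (v y + ν) ≤ 1} =
          -Real.log (∑ y, Real.exp (v y)) ∧
        (-Real.log (∑ y, Real.exp (v y))) ∈
          {ν : ℝ | ∑ y, Real.exp (v y + ν) ≤ 1}) ∧
    (∀ (x : X) (μ : Fin m → ℝ),
      phiFn (fun (q : Y → ℝ) (y : Y) =>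
          if q y = 0 then (⊤ : EReal) else ((-Real.log (q y) : ℝ) : EReal)) Φ μ x =
        -Real.log (∑ y, Real.exp (∑ i, Φ (x, y) i * μ i))) ∧
    (∀ (x : X) (μ : Fin m → ℝ) (h : X → Y → ℝ), (∀ x', h x' ∈ probSimplex Y) →
      (∀ y, Real.exp ((∑ i, Φ (x, y) i * μ i) +
          phiFn (fun (q : Y → ℝ) (y' : Y) =>
            if q y' = 0 then (⊤ : EReal) else ((-Real.log (q y') : ℝ) : EReal)) Φ μ x) ≤
        h x y) →
      ∀ y, h x y =
        Real.exp (∑ i, Φ (x, y) i * μ i) /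
          ∑ y', Real.exp (∑ i, Φ (x, y') i * μ i)) := by
  have hphi : ∀ (x : X) (μ : Fin m → ℝ),
      phiFn (fun (q : Y → ℝ) (y : Y) =>
          if q y = 0 then (⊤ : EReal) else ((-Real.log (q y) : ℝ) : EReal)) Φ μ x =
        -Real.log (∑ y, Real.exp (∑ i, Φ (x, y) i * μ i)) := by
    intro x μ
    have hset : {ν : ℝ | (fun y => (∑ i, Φ (x, y) i * μ i) + ν) ∈
        LsetOf (fun (q : Y → ℝ) (y : Y) =>
          if q y = 0 then (⊤ : EReal) else ((-Real.log (q y) : ℝ) : EReal))} =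
        {ν : ℝ | ∑ y, Real.exp ((∑ i, Φ (x, y) i * μ i) + ν) ≤ 1} := by
      ext ν
      exact mem_Lset_log_iff _
    rw [phiFn, hset, sup_aux, csSup_Iic]
  refine ⟨fun v => ?_, hphi, ?_⟩
  · rw [sup_aux v]
    exact ⟨csSup_Iic, Set.self_mem_Iic⟩
  · intro x μ h hsimp hge y
    set v : Y → ℝ := fun y => ∑ i, Φ (x, y) i * μ i with hv
    set S : ℝ := ∑ y', Real.exp (v y') with hSdef
    have hS : 0 < S :=
      Finset.sum_pos (fun y _ => Real.exp_pos _) Finset.univ_nonempty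
    have hge' : ∀ y', Real.exp (v y') / S ≤ h x y' := by
      intro y'
      have := hge y'
      rwa [hphi x μ, ← Real.log_inv, Real.exp_add, Real.exp_log (by positivity),
        ← div_eq_mul_inv] at this
    have hsum : ∑ y', Real.exp (v y') / S = 1 := by
      rw [← Finset.sum_div, ← hSdef, div_self hS.ne']
    have hsumh : ∑ y', h x y' = 1 := (hsimp x).2
    by_contra hne
    have hlt : Real.exp (v y) / S < h x y :=
      lt_of_le_of_ne (hge' y) fun heq => hne heq.symm
    have : (1 : ℝ) < 1 := by
      calc (1 : ℝ) = ∑ y', Real.exp (v y') / S := hsum.symm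
        _ < ∑ y', h x y' := Finset.sum_lt_sum (fun i _ => hge' i) ⟨y, Finset.mem_univ y, hlt⟩
        _ = 1 := hsumh
    exact absurd this (lt_irrefl 1)
end
end
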